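/- arXiv:2506.13033 — 8 statements merged into one kernel-verified Lean document; each statement's English description precedes it below -/
import Mathlib

section
/- Let d ≥ 1, let f ∈ F(L,m) with unique minimizer x*, and let L̄ ≥ L with κ̄ = L̄/m > 1. Let x_t = y_t ∈ ℝ^d, and set y_{t+1} = x_t − (1/L̄)∇f(x_t) and x_{t+1} = y_{t+1} (a gradient-descent step). Then (1 + δ^GD) W(x_{t+1}, y_{t+1}) − W(x_t, y_t) ≤ −(1/(2L̄)) ‖∇f(x_t)‖², where δ^GD = 1/(κ̄ − 1). -/
set_option maxHeartbeats 1000000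


open scoped RealInnerProductSpace

/-- The Lyapunov function `W(x, y) = f(y) − f(x*) + (m/2)‖x + √κ̄ (x − y) − x*‖²`. -/
noncomputable def lyapW {d : ℕ} (f : EuclideanSpace ℝ (Fin d) → ℝ)
    (xstar : EuclideanSpace ℝ (Fin d)) (m κ : ℝ)
    (x y : EuclideanSpace ℝ (Fin d)) : ℝ :=
  f y - f xstar + m / 2 * ‖x + Real.sqrt κ • (x - y) - xstar‖ ^ 2

/-- One gradient-descent step decreases `W` at the GD rate:
for `x_t = y_t`, `y_{t+1} = x_t − (1/L̄)∇f(x_t)`, `x_{t+1} = y_{t+1}`,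
`(1 + δ^GD) W(x_{t+1}, y_{t+1}) − W(x_t, y_t) ≤ −(1/(2L̄))‖∇f(x_t)‖²`,
where `δ^GD = 1/(κ̄ − 1)` and `κ̄ = L̄/m`. -/
theorem stmt2
    {d : ℕ} (hd : 1 ≤ d)
    {L m : ℝ} (hm : 0 < m) (hmL : m ≤ L)
    (f : EuclideanSpace ℝ (Fin d) → ℝ)
    (hdiff : Differentiable ℝ f)
    (hsmooth : ∀ x y : EuclideanSpace ℝ (Fin d),
      f y ≤ f x + ⟪gradient f x, y - x⟫ + L / 2 * ‖y - x‖ ^ 2)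
    (hstrong : ∀ x y : EuclideanSpace ℝ (Fin d),
      f x + ⟪gradient f x, y - x⟫ + m / 2 * ‖y - x‖ ^ 2 ≤ f y)
    (xstar : EuclideanSpace ℝ (Fin d)) (hmin : ∀ z, f xstar ≤ f z)
    {Lbar : ℝ} (hLbarL : L ≤ Lbar) (hkappa : 1 < Lbar / m)
    (xt yt : EuclideanSpace ℝ (Fin d)) (hxyt : xt = yt)
    (y1 : EuclideanSpace ℝ (Fin d)) (hy1 : y1 = xt - (1 / Lbar) • gradient f xt)
    (x1 : EuclideanSpace ℝ (Fin d)) (hx1 : x1 = y1) :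
    (1 + 1 / (Lbar / m - 1)) * lyapW f xstar m (Lbar / m) x1 y1
        - lyapW f xstar m (Lbar / m) xt yt
      ≤ -(1 / (2 * Lbar)) * ‖gradient f xt‖ ^ 2 := by
  subst hx1 hy1
  subst hxyt
  set g := gradient f xt with hg
  set a := xt - xstar with ha
  have hmlt : m < Lbar := (one_lt_div hm).mp hkappa
  have hLbar : 0 < Lbar := lt_trans hm hmlt
  -- smoothness at the new point
  have h1 := hsmooth xt (xt - (1 / Lbar) • g)
  have hdiffpt : (xt - (1 / Lbar) • g) - xt = -((1 / Lbar) • g) := by abel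
  rw [hdiffpt] at h1
  have hinner1 : ⟪g, -((1 / Lbar) • g)⟫ = -((1 / Lbar) * ‖g‖ ^ 2) := by
    rw [inner_neg_right, real_inner_smul_right, real_inner_self_eq_norm_sq]
  have hnorm1 : ‖-((1 / Lbar) • g)‖ ^ 2 = (1 / Lbar) ^ 2 * ‖g‖ ^ 2 := by
    rw [norm_neg, norm_smul, mul_pow, Real.norm_eq_abs, sq_abs]
  rw [hinner1, hnorm1] at h1
  -- strong convexity towards the minimizer
  have h2 := hstrong xt xstar
  have hinner2 : ⟪g, xstar - xt⟫ = -⟪g, a⟫ := by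
    rw [ha, inner_sub_right, inner_sub_right]; ring
  have hnorm2 : ‖xstar - xt‖ ^ 2 = ‖a‖ ^ 2 := by
    rw [ha, ← norm_neg]; congr 1; abel
  rw [hinner2, hnorm2] at h2
  -- expand the new distance
  have hnorm3 : ‖(xt - (1 / Lbar) • g) - xstar‖ ^ 2
      = ‖a‖ ^ 2 - 2 * (1 / Lbar) * ⟪g, a⟫ + (1 / Lbar) ^ 2 * ‖g‖ ^ 2 := by
    have he : (xt - (1 / Lbar) • g) - xstar = a - (1 / Lbar) • g := by rw [ha]; abel
    rw [he, norm_sub_sq_real, real_inner_smul_right, norm_smul, mul_pow,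
      Real.norm_eq_abs, sq_abs, real_inner_comm a g]
    ring
  simp only [lyapW, sub_self, smul_zero, add_zero, hnorm3]
  have hGnn : (0:ℝ) ≤ ‖g‖ ^ 2 := by positivity
  have hF1 : f (xt - (1 / Lbar) • g) - f xstar
      ≤ (f xt - f xstar) - 1 / (2 * Lbar) * ‖g‖ ^ 2 := by
    have hstep : L / 2 * ((1 / Lbar) ^ 2 * ‖g‖ ^ 2)
        ≤ Lbar / 2 * ((1 / Lbar) ^ 2 * ‖g‖ ^ 2) := by
      have h0 : (0:ℝ) ≤ (1 / Lbar) ^ 2 * ‖g‖ ^ 2 := by positivity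
      nlinarith
    have heq1 : Lbar / 2 * ((1 / Lbar) ^ 2 * ‖g‖ ^ 2) = 1 / (2 * Lbar) * ‖g‖ ^ 2 := by
      field_simp
    have heq2 : 1 / Lbar * ‖g‖ ^ 2 = 2 * (1 / (2 * Lbar) * ‖g‖ ^ 2) := by
      field_simp
    linarith
  have hF0 : f xt - f xstar ≤ ⟪g, a⟫ - m / 2 * ‖a‖ ^ 2 := by linarith
  have hδ : 0 < Lbar / m - 1 := by linarith
  set δ := 1 / (Lbar / m - 1) with hδdef
  have hδpos : 0 < δ := by positivity
  have hδval : δ = m / (Lbar - m) := by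
    rw [hδdef, div_sub_one hm.ne', one_div_div]
  have hA := mul_le_mul_of_nonneg_left hF1 (by linarith : (0:ℝ) ≤ 1 + δ)
  have hB := mul_le_mul_of_nonneg_left hF0 hδpos.le
  have hE : δ * (⟪g, a⟫ - m / 2 * ‖a‖ ^ 2)
      + (1 + δ) * (m / 2) * (‖a‖ ^ 2 - 2 * (1 / Lbar) * ⟪g, a⟫ + (1 / Lbar) ^ 2 * ‖g‖ ^ 2)
      - m / 2 * ‖a‖ ^ 2 - (1 + δ) * (1 / (2 * Lbar)) * ‖g‖ ^ 2
      = -(1 / (2 * Lbar)) * ‖g‖ ^ 2 := by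
    have hne : Lbar - m ≠ 0 := sub_ne_zero.mpr hmlt.ne'
    rw [hδval]
    field_simp
    ring
  linarith [hA, hB, hE]
end

section
/- Let d ≥ 1, let f ∈ F(L,m) with unique minimizer x*, and let L̄ ≥ L with κ̄ = L̄/m > 1. Let x_t, y_t ∈ ℝ^d be arbitrary, and set y_{t+1} = x_t − (1/L̄)∇f(x_t) and x_{t+1} = y_{t+1} + θ (y_{t+1} − y_t), where θ = (√κ̄ − 1)/(√κ̄ + 1) (a Nesterov accelerated gradient step). Then (1 + δ^NAG) W(x_{t+1}, y_{t+1}) − W(x_t, y_t) ≤ 0, where δ^NAG = 1/(√κ̄ − 1). -/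
set_option maxHeartbeats 1000000

open scoped RealInnerProductSpace

private lemma norm_comb3 {E : Type*} [NormedAddCommGroup E] [InnerProductSpace ℝ E]
    (p q r : ℝ) (g a b : E) :
    ‖p • g + (q • a + r • b)‖ ^ 2 = p^2*‖g‖^2 + q^2*‖a‖^2 + r^2*‖b‖^2
      + 2*(p*q)*⟪g,a⟫ + 2*(p*r)*⟪g,b⟫ + 2*(q*r)*⟪a,b⟫ := by
  rw [← real_inner_self_eq_norm_sq, ← real_inner_self_eq_norm_sq g,
    ← real_inner_self_eq_norm_sq a, ← real_inner_self_eq_norm_sq b]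
  simp only [inner_add_left, inner_add_right, real_inner_smul_left, real_inner_smul_right,
    real_inner_comm a g, real_inner_comm b g, real_inner_comm b a]
  ring

/-- One Nesterov accelerated gradient step decreases `W` at
the accelerated rate: for arbitrary `x_t, y_t`, with
`y_{t+1} = x_t − (1/L̄)∇f(x_t)`, `x_{t+1} = y_{t+1} + θ(y_{t+1} − y_t)`,
`θ = (√κ̄ − 1)/(√κ̄ + 1)`, we have
`(1 + δ^NAG) W(x_{t+1}, y_{t+1}) − W(x_t, y_t) ≤ 0` with `δ^NAG = 1/(√κ̄ − 1)`. -/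
theorem stmt3
    {d : ℕ} (hd : 1 ≤ d)
    {L m : ℝ} (hm : 0 < m) (hmL : m ≤ L)
    (f : EuclideanSpace ℝ (Fin d) → ℝ)
    (hdiff : Differentiable ℝ f)
    (hsmooth : ∀ x y : EuclideanSpace ℝ (Fin d),
      f y ≤ f x + ⟪gradient f x, y - x⟫ + L / 2 * ‖y - x‖ ^ 2)
    (hstrong : ∀ x y : EuclideanSpace ℝ (Fin d),
      f x + ⟪gradient f x, y - x⟫ + m / 2 * ‖y - x‖ ^ 2 ≤ f y)
    (xstar : EuclideanSpace ℝ (Fin d)) (hmin : ∀ z, f xstar ≤ f z)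
    {Lbar : ℝ} (hLbarL : L ≤ Lbar) (hkappa : 1 < Lbar / m)
    (xt yt : EuclideanSpace ℝ (Fin d))
    (y1 : EuclideanSpace ℝ (Fin d)) (hy1 : y1 = xt - (1 / Lbar) • gradient f xt)
    (x1 : EuclideanSpace ℝ (Fin d))
    (hx1 : x1 = y1 + ((Real.sqrt (Lbar / m) - 1) / (Real.sqrt (Lbar / m) + 1)) • (y1 - yt)) :
    (1 + 1 / (Real.sqrt (Lbar / m) - 1)) * lyapW f xstar m (Lbar / m) x1 y1
        - lyapW f xstar m (Lbar / m) xt yt ≤ 0 := by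
  have hL : 0 < L := lt_of_lt_of_le hm hmL
  have hLb : 0 < Lbar := lt_of_lt_of_le hL hLbarL
  set s := Real.sqrt (Lbar / m) with hsdef
  have hs2 : s ^ 2 = Lbar / m := Real.sq_sqrt (by positivity)
  have hs0 : 0 ≤ s := Real.sqrt_nonneg _
  have hs1 : 1 < s := by nlinarith
  have hLbm : m * s ^ 2 = Lbar := by
    rw [hs2]; field_simp
  have hsne : s - 1 ≠ 0 := by linarith
  have hsne' : s + 1 ≠ 0 := by linarith
  have hmne : m ≠ 0 := ne_of_gt hm
  have hsne0 : s ≠ 0 := by linarith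
  set g := gradient f xt with hg
  set a := xt - xstar with ha
  set b := xt - yt with hb
  -- vector identities
  have hθ : ((1:ℝ) + s) * ((s - 1) / (s + 1)) = s - 1 := by
    field_simp; ring
  have e1 : x1 + s • (x1 - y1) - xstar
      = y1 + (((1:ℝ) + s) * ((s - 1) / (s + 1))) • (y1 - yt) - xstar := by
    rw [hx1]; module
  rw [hθ] at e1
  have e2 : y1 + (s - 1) • (y1 - yt) - xstar
      = (-(s / Lbar)) • g + ((1:ℝ) • a + (s - 1) • b) := by
    rw [hy1, ha, hb]; module
  have hv1 : x1 + s • (x1 - y1) - xstar = (-(s / Lbar)) • g + ((1:ℝ) • a + (s - 1) • b) :=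
    e1.trans e2
  have hv0 : xt + s • (xt - yt) - xstar = (0:ℝ) • g + ((1:ℝ) • a + s • b) := by
    rw [ha, hb]; module
  have hN1 : ‖x1 + s • (x1 - y1) - xstar‖ ^ 2
      = (-(s/Lbar))^2*‖g‖^2 + 1^2*‖a‖^2 + (s-1)^2*‖b‖^2
        + 2*((-(s/Lbar))*1)*⟪g,a⟫ + 2*((-(s/Lbar))*(s-1))*⟪g,b⟫ + 2*(1*(s-1))*⟪a,b⟫ := by
    rw [hv1, norm_comb3]
  have hN0 : ‖xt + s • (xt - yt) - xstar‖ ^ 2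
      = (0:ℝ)^2*‖g‖^2 + 1^2*‖a‖^2 + s^2*‖b‖^2
        + 2*(0*1)*⟪g,a⟫ + 2*(0*s)*⟪g,b⟫ + 2*(1*s)*⟪a,b⟫ := by
    rw [hv0, norm_comb3]
  -- functional inequalities
  have hF1 : f y1 ≤ f xt - ‖g‖^2 / (2 * Lbar) := by
    have h := hsmooth xt y1
    have e : y1 - xt = (-(1/Lbar)) • g := by rw [hy1]; module
    rw [e, real_inner_smul_right, real_inner_self_eq_norm_sq, norm_smul] at h
    have habs : ‖(-(1/Lbar))‖ = 1/Lbar := by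
      rw [Real.norm_eq_abs, abs_neg, abs_of_pos (by positivity)]
    rw [habs] at h
    have hgn : (0:ℝ) ≤ ‖g‖^2 := sq_nonneg _
    have hmul : L / 2 * (1/Lbar * ‖g‖)^2 ≤ Lbar / 2 * (1/Lbar * ‖g‖)^2 := by
      apply mul_le_mul_of_nonneg_right (by linarith) (sq_nonneg _)
    have hid : Lbar / 2 * (1/Lbar * ‖g‖)^2 = ‖g‖^2 / (2 * Lbar) := by
      field_simp
    rw [← hg] at h
    have hid2 : -(1/Lbar) * ‖g‖^2 = -(‖g‖^2 / (2*Lbar)) - ‖g‖^2 / (2*Lbar) := by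
      field_simp
      ring
    linarith
  have hF2 : f xt - ⟪g,a⟫ + m/2 * ‖a‖^2 ≤ f xstar := by
    have h := hstrong xt xstar
    have e : xstar - xt = -a := by rw [ha]; abel
    rw [e, inner_neg_right, norm_neg] at h
    linarith
  have hF3 : f xt - ⟪g,b⟫ + m/2 * ‖b‖^2 ≤ f yt := by
    have h := hstrong xt yt
    have e : yt - xt = -b := by rw [hb]; abel
    rw [e, inner_neg_right, norm_neg] at h
    linarith
  -- final scalar computation
  simp only [lyapW, ← hsdef]
  rw [hN1, hN0]
  have hkey :
      (1 + 1 / (s - 1)) * (f y1 - f xstar + m / 2 *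
        ((-(s/Lbar))^2*‖g‖^2 + 1^2*‖a‖^2 + (s-1)^2*‖b‖^2
          + 2*((-(s/Lbar))*1)*⟪g,a⟫ + 2*((-(s/Lbar))*(s-1))*⟪g,b⟫ + 2*(1*(s-1))*⟪a,b⟫))
      - (f yt - f xstar + m / 2 *
        ((0:ℝ)^2*‖g‖^2 + 1^2*‖a‖^2 + s^2*‖b‖^2
          + 2*(0*1)*⟪g,a⟫ + 2*(0*s)*⟪g,b⟫ + 2*(1*s)*⟪a,b⟫))
      = (s/(s-1)) * (f y1 - (f xt - ‖g‖^2 / (2 * Lbar)))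
        + (1/(s-1)) * ((f xt - ⟪g,a⟫ + m/2 * ‖a‖^2) - f xstar)
        + ((f xt - ⟪g,b⟫ + m/2 * ‖b‖^2) - f yt)
        - m * (s + 1) / 2 * ‖b‖^2 := by
    rw [← hLbm]
    field_simp
    ring
  rw [hkey]
  have c1 : (s/(s-1)) * (f y1 - (f xt - ‖g‖^2 / (2 * Lbar))) ≤ 0 :=
    mul_nonpos_of_nonneg_of_nonpos (div_nonneg (by linarith) (by linarith)) (by linarith)
  have c2 : (1/(s-1)) * ((f xt - ⟪g,a⟫ + m/2 * ‖a‖^2) - f xstar) ≤ 0 :=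
    mul_nonpos_of_nonneg_of_nonpos (div_nonneg (by linarith) (by linarith)) (by linarith)
  have c4 : 0 ≤ m * (s + 1) / 2 * ‖b‖^2 := by positivity
  linarith
end

section
/- Let d ≥ 1, let f ∈ F(L,m) with unique minimizer x*, and let L̄ ≥ L with κ̄ = L̄/m > 1. Suppose the sequences (x_t), (y_t), (m_t) are generated by NAG-free with parameter L̄ from x_0 = y_0 and m_0 ∈ [m, L] (so that m_t ∈ [m, L] is nonincreasing). Then for every t ≥ 0, V^GD_{t+1}(x_{t+1}, y_{t+1}) ≤ 2 L̄ ((κ̄ − 1)/κ̄)^t ‖x_0 − x*‖², where V^GD_{t+1} = W + (ᾱ_t/√κ̄) U. -/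
open scoped RealInnerProductSpace Classical

/-- The auxiliary function `U(x, y) = f(y) − f(x*) + (L̄/2)‖y − x*‖²`. -/
noncomputable def lyapU {d : ℕ} (f : EuclideanSpace ℝ (Fin d) → ℝ)
    (xstar : EuclideanSpace ℝ (Fin d)) (Lbar : ℝ)
    (_x y : EuclideanSpace ℝ (Fin d)) : ℝ :=
  f y - f xstar + Lbar / 2 * ‖y - xstar‖ ^ 2

section Helpers

variable {E : Type*} [NormedAddCommGroup E] [InnerProductSpace ℝ E]

private lemma exp_sub_sq (a b : ℝ) (w z : E) :
    ‖a • w - b • z‖ ^ 2 = a ^ 2 * ‖w‖ ^ 2 - 2 * (a * b) * ⟪w, z⟫ + b ^ 2 * ‖z‖ ^ 2 := by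
  rw [← real_inner_self_eq_norm_sq, ← real_inner_self_eq_norm_sq, ← real_inner_self_eq_norm_sq]
  simp only [inner_sub_left, inner_sub_right, real_inner_smul_left, real_inner_smul_right]
  rw [real_inner_comm z w]; ring

private lemma key_scalar (s t m nu nv nr iuv iur irv fx fy fyp fs : ℝ) :
    ((s^2-1)^2 + t*s*(s^2-1)) * ((s^2-1)*(s*(s-1)*(fy - fs + m/2*((1+s)^2*nu - 2*((1+s)*s)*iuv + s^2*nv)) + (s-1-t)*(fy - fs + m*s^2/2*nv)) - s^2*(s*(s-1)*(fyp - fs + m/2*((1+t)^2*nr - 2*((1+t)*t)*irv + t^2*nv)) + (s-1-t)*(fyp - fs + m*s^2/2*nr))) = ((s^2-1)^2 + t*s*(s^2-1)) * (s^2*(s^2-1-t)*(fx - m*s^2/2*(nu - 2*iur + nr) - fyp) + s*(s^2-1-t)*(fs - fx + m*s^2*(nu - iur) - m/2*nu) + s*(s-1)*(s^2-1-t)*(fy - fx - m*s^2*(iuv - nu - irv + iur) - m/2*(nv - 2*iuv + nu)) + (s-1)*(s^2-1-t)*(fy - fs - m/2*nv)) + m/2*(s*(((s^2-1)^2 + t*s*(s^2-1))^2*nu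 - 2*(((s^2-1)^2 + t*s*(s^2-1))*((s-1)*((s^2-1)*(s+1+t))))*iuv + ((s-1)*((s^2-1)*(s+1+t)))^2*nv) + ((s^2-1)^2 + t*s*(s^2-1))*(s^2-(1+t)^2)*(s^3*(s-1))*(nr - 2*irv + nv) + (1 + t - s - 3*s*t - 2*s*t^2 - 3*s^2 + 2*s^2*t^2 + 3*s^3 + 6*s^3*t + 2*s^3*t^2 + 3*s^4 - 3*s^4*t - 2*s^4*t^2 - 3*s^5 - 3*s^5*t - s^6 + 2*s^6*t + s^7)*nv) := by ring

private lemma H_nonneg (s t : ℝ) (h1 : 0 ≤ s - 1 - t) (h2 : 0 ≤ t) :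
    0 ≤ (1 + t - s - 3*s*t - 2*s*t^2 - 3*s^2 + 2*s^2*t^2 + 3*s^3 + 6*s^3*t + 2*s^3*t^2 + 3*s^4 - 3*s^4*t - 2*s^4*t^2 - 3*s^5 - 3*s^5*t - s^6 + 2*s^6*t + s^7) := by
  nlinarith [mul_nonneg (pow_nonneg h1 0) (pow_nonneg h2 4),
    mul_nonneg (pow_nonneg h1 0) (pow_nonneg h2 5),
    mul_nonneg (pow_nonneg h1 0) (pow_nonneg h2 6),
    mul_nonneg (pow_nonneg h1 0) (pow_nonneg h2 7),
    mul_nonneg (pow_nonneg h1 1) (pow_nonneg h2 3),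
    mul_nonneg (pow_nonneg h1 1) (pow_nonneg h2 4),
    mul_nonneg (pow_nonneg h1 1) (pow_nonneg h2 5),
    mul_nonneg (pow_nonneg h1 1) (pow_nonneg h2 6),
    mul_nonneg (pow_nonneg h1 2) (pow_nonneg h2 2),
    mul_nonneg (pow_nonneg h1 2) (pow_nonneg h2 3),
    mul_nonneg (pow_nonneg h1 2) (pow_nonneg h2 4),
    mul_nonneg (pow_nonneg h1 2) (pow_nonneg h2 5),
    mul_nonneg (pow_nonneg h1 3) (pow_nonneg h2 1),
    mul_nonneg (pow_nonneg h1 3) (pow_nonneg h2 2),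
    mul_nonneg (pow_nonneg h1 3) (pow_nonneg h2 3),
    mul_nonneg (pow_nonneg h1 3) (pow_nonneg h2 4),
    mul_nonneg (pow_nonneg h1 4) (pow_nonneg h2 0),
    mul_nonneg (pow_nonneg h1 4) (pow_nonneg h2 1),
    mul_nonneg (pow_nonneg h1 4) (pow_nonneg h2 2),
    mul_nonneg (pow_nonneg h1 4) (pow_nonneg h2 3),
    mul_nonneg (pow_nonneg h1 5) (pow_nonneg h2 0),
    mul_nonneg (pow_nonneg h1 5) (pow_nonneg h2 1),
    mul_nonneg (pow_nonneg h1 5) (pow_nonneg h2 2),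
    mul_nonneg (pow_nonneg h1 6) (pow_nonneg h2 0),
    mul_nonneg (pow_nonneg h1 6) (pow_nonneg h2 1),
    mul_nonneg (pow_nonneg h1 7) (pow_nonneg h2 0)]

end Helpers

set_option maxHeartbeats 1000000 in
private lemma step_lemma {N : ℕ} {L m Lbar : ℝ}
    (hm : 0 < m) (hmL : m ≤ L) (hLL : L ≤ Lbar) (hκ : 1 < Lbar / m)
    (f : EuclideanSpace ℝ (Fin N) → ℝ)
    (hsmooth : ∀ x y : EuclideanSpace ℝ (Fin N),
      f y ≤ f x + ⟪gradient f x, y - x⟫ + L / 2 * ‖y - x‖ ^ 2)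
    (hstrong : ∀ x y : EuclideanSpace ℝ (Fin N),
      f x + ⟪gradient f x, y - x⟫ + m / 2 * ‖y - x‖ ^ 2 ≤ f y)
    (xstar : EuclideanSpace ℝ (Fin N)) (hgrad0 : gradient f xstar = 0)
    (x y yp xp : EuclideanSpace ℝ (Fin N)) (β w : ℝ)
    (hyp : yp = x - (1 / Lbar) • gradient f x)
    (hxp : xp = yp + β • (yp - y))
    (hβ0 : 0 ≤ β)
    (hβθ : β * (Real.sqrt (Lbar / m) + 1) ≤ Real.sqrt (Lbar / m) - 1)
    (hw : w = (1 - β * (Real.sqrt (Lbar / m) + 1) / (Real.sqrt (Lbar / m) - 1)) /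
      Real.sqrt (Lbar / m)) :
    lyapW f xstar m (Lbar / m) xp yp + w * lyapU f xstar Lbar xp yp ≤
      (Lbar / m - 1) / (Lbar / m) *
        (lyapW f xstar m (Lbar / m) x y + w * lyapU f xstar Lbar x y) := by
  have hL0 : (0:ℝ) < Lbar := lt_of_lt_of_le hm (hmL.trans hLL)
  have hκ0 : (0:ℝ) < Lbar / m := div_pos hL0 hm
  obtain ⟨s, hs_def⟩ : ∃ s' : ℝ, s' = Real.sqrt (Lbar / m) := ⟨_, rfl⟩
  rw [← hs_def] at hβθ hw
  have hs2 : s ^ 2 = Lbar / m := by rw [hs_def]; exact Real.sq_sqrt hκ0.le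
  have hs0 : (0:ℝ) ≤ s := by rw [hs_def]; exact Real.sqrt_nonneg _
  have hs1 : 1 < s := by nlinarith [hs2]
  have hspos : (0:ℝ) < s := by linarith
  have hsne : s ≠ 0 := ne_of_gt hspos
  have hs1ne : s - 1 ≠ 0 := sub_ne_zero.mpr (ne_of_gt hs1)
  have hLms : Lbar = m * s ^ 2 := by rw [hs2]; field_simp
  obtain ⟨t, ht_def⟩ : ∃ t' : ℝ, t' = β * (s + 1) := ⟨_, rfl⟩
  rw [← ht_def] at hβθ hw
  have ht0 : 0 ≤ t := by rw [ht_def]; exact mul_nonneg hβ0 (by linarith)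
  have hγ0 : 0 ≤ s - 1 - t := by linarith
  have hw' : w = (s - 1 - t) / (s * (s - 1)) := by
    have hA : 1 - t / (s - 1) = (s - 1 - t) / (s - 1) := by
      rw [eq_div_iff hs1ne, sub_mul, one_mul, div_mul_cancel₀ _ hs1ne]
    rw [hw, hA, div_div, mul_comm (s - 1) s]
  have hsm1 : (0:ℝ) ≤ s - 1 := by linarith
  have hρ : (Lbar / m - 1) / (Lbar / m) = (s ^ 2 - 1) / s ^ 2 := by rw [← hs2]
  have hpos3 : (0:ℝ) < s ^ 3 * (s - 1) := mul_pos (by positivity) (by linarith)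
  have hs3 : (0:ℝ) ≤ s ^ 3 * (s - 1) := hpos3.le
  have hwmul : ∀ E : ℝ, s ^ 3 * (s - 1) * ((s - 1 - t) / (s * (s - 1)) * E)
      = s ^ 2 * ((s - 1 - t) * E) := by
    intro E; field_simp
  have hwmul2 : ∀ E : ℝ, s * (s - 1) * ((s - 1 - t) / (s * (s - 1)) * E)
      = (s - 1 - t) * E := by
    intro E; field_simp
  have hrmul : ∀ E : ℝ, s ^ 3 * (s - 1) * ((s ^ 2 - 1) / s ^ 2 * E)
      = (s ^ 2 - 1) * (s * (s - 1) * E) := by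
    intro E; field_simp
  obtain ⟨u, hu⟩ : ∃ u' : EuclideanSpace ℝ (Fin N), u' = x - xstar := ⟨_, rfl⟩
  obtain ⟨v, hv⟩ : ∃ v' : EuclideanSpace ℝ (Fin N), v' = y - xstar := ⟨_, rfl⟩
  obtain ⟨r, hr⟩ : ∃ r' : EuclideanSpace ℝ (Fin N), r' = yp - xstar := ⟨_, rfl⟩
  have hur : u - r = (1 / Lbar) • gradient f x := by rw [hu, hr, hyp]; module
  have hgur : gradient f x = Lbar • (u - r) := by
    rw [hur, smul_smul, mul_one_div, div_self hL0.ne', one_smul]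
  have hypx : yp - x = r - u := by rw [hr, hu]; module
  have hyx : y - x = v - u := by rw [hv, hu]; module
  have hxsx : xstar - x = -u := by rw [hu]; module
  have hypy : yp - y = r - v := by rw [hr, hv]; module
  have hyp_r : yp = r + xstar := by rw [hr]; module
  have hx_u : x = u + xstar := by rw [hu]; module
  have hy_v : y = v + xstar := by rw [hv]; module
  have hz1 : xp + s • (xp - yp) - xstar = (1 + t) • r - t • v := by
    rw [hxp, hypy, ht_def, hyp_r]; module
  have hz2 : x + s • (x - y) - xstar = (1 + s) • u - s • v := by
    rw [hx_u, hy_v]; module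
  have eWp : lyapW f xstar m (Lbar / m) xp yp
      = f yp - f xstar + m / 2 * ((1+t) ^ 2 * ‖r‖ ^ 2 - 2 * ((1+t) * t) * ⟪r, v⟫ + t ^ 2 * ‖v‖ ^ 2) := by
    simp only [lyapW]; rw [← hs_def, hz1, exp_sub_sq]
  have eW : lyapW f xstar m (Lbar / m) x y
      = f y - f xstar + m / 2 * ((1+s) ^ 2 * ‖u‖ ^ 2 - 2 * ((1+s) * s) * ⟪u, v⟫ + s ^ 2 * ‖v‖ ^ 2) := by
    simp only [lyapW]; rw [← hs_def, hz2, exp_sub_sq]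
  have eUp : lyapU f xstar Lbar xp yp = f yp - f xstar + m * s ^ 2 / 2 * ‖r‖ ^ 2 := by
    simp only [lyapU]; rw [← hr, hLms]
  have eU : lyapU f xstar Lbar x y = f y - f xstar + m * s ^ 2 / 2 * ‖v‖ ^ 2 := by
    simp only [lyapU]; rw [← hv, hLms]
  have hD1 : 0 ≤ (f x - m*s^2/2*(‖u‖^2 - 2*⟪u, r⟫ + ‖r‖^2) - f yp) := by
    have h := hsmooth x yp
    have h1 : ⟪gradient f x, yp - x⟫ = -(Lbar * (‖u‖ ^ 2 - 2 * ⟪u, r⟫ + ‖r‖ ^ 2)) := by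
      rw [hypx, hgur, real_inner_smul_left, show r - u = -(u - r) from by module,
        inner_neg_right, real_inner_self_eq_norm_sq, norm_sub_sq_real]
      ring
    have h2 : ‖yp - x‖ ^ 2 = ‖u‖ ^ 2 - 2 * ⟪u, r⟫ + ‖r‖ ^ 2 := by
      rw [hypx, show r - u = -(u - r) from by module, norm_neg, norm_sub_sq_real]
    have hXnn : 0 ≤ ‖u‖ ^ 2 - 2 * ⟪u, r⟫ + ‖r‖ ^ 2 := by rw [← h2]; positivity
    rw [h1, h2, hLms] at h
    have hLL' : L ≤ m * s ^ 2 := by rw [← hLms]; exact hLL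
    linarith [h, mul_nonneg (sub_nonneg.mpr hLL') hXnn]
  have hD2 : 0 ≤ (f xstar - f x + m*s^2*(‖u‖^2 - ⟪u, r⟫) - m/2*‖u‖^2) := by
    have h := hstrong x xstar
    have h1 : ⟪gradient f x, xstar - x⟫ = -(Lbar * (‖u‖ ^ 2 - ⟪u, r⟫)) := by
      rw [hxsx, hgur, real_inner_smul_left, inner_neg_right, inner_sub_left,
        real_inner_comm u r, real_inner_self_eq_norm_sq]
      ring
    have h2 : ‖xstar - x‖ ^ 2 = ‖u‖ ^ 2 := by rw [hxsx, norm_neg]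
    rw [h1, h2, hLms] at h
    linarith [h]
  have hD3 : 0 ≤ (f y - f x - m*s^2*(⟪u, v⟫ - ‖u‖^2 - ⟪r, v⟫ + ⟪u, r⟫) - m/2*(‖v‖^2 - 2*⟪u, v⟫ + ‖u‖^2)) := by
    have h := hstrong x y
    have h1 : ⟪gradient f x, y - x⟫ = Lbar * (⟪u, v⟫ - ‖u‖ ^ 2 - ⟪r, v⟫ + ⟪u, r⟫) := by
      rw [hyx, hgur, real_inner_smul_left]
      simp only [inner_sub_left, inner_sub_right]
      rw [real_inner_comm u r, real_inner_self_eq_norm_sq]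
      ring
    have h2 : ‖y - x‖ ^ 2 = ‖v‖ ^ 2 - 2 * ⟪u, v⟫ + ‖u‖ ^ 2 := by
      rw [hyx, norm_sub_sq_real, real_inner_comm u v]
    rw [h1, h2, hLms] at h
    linarith [h]
  have hD4 : 0 ≤ (f y - f xstar - m/2*‖v‖^2) := by
    have h := hstrong xstar y
    rw [hgrad0, inner_zero_left, ← hv] at h
    linarith [h]
  have hFF : 0 ≤ s ^ 2 - (1+t) ^ 2 := by
    have e : s ^ 2 - (1+t) ^ 2 = (s - 1 - t) * (s + 1 + t) := by ring
    rw [e]; exact mul_nonneg hγ0 (by linarith)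
  have hsq1 : (0:ℝ) < s ^ 2 - 1 := by nlinarith [mul_pos (sub_pos.mpr hs1) (show (0:ℝ) < s + 1 by linarith)]
  have hAH : (0:ℝ) < ((s^2-1)^2 + t*s*(s^2-1)) :=
    add_pos_of_pos_of_nonneg (pow_pos hsq1 2) (mul_nonneg (mul_nonneg ht0 hs0) hsq1.le)
  have hc1 : 0 ≤ s ^ 2 - 1 - t := by nlinarith [hγ0, hsq1, hs1]
  have hQ1 : 0 ≤ ((s^2-1)^2 + t*s*(s^2-1))^2*‖u‖^2 - 2*(((s^2-1)^2 + t*s*(s^2-1))*((s-1)*((s^2-1)*(s+1+t))))*⟪u, v⟫ + ((s-1)*((s^2-1)*(s+1+t)))^2*‖v‖^2 := by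
    rw [← exp_sub_sq]; positivity
  have hQ2 : 0 ≤ (‖r‖^2 - 2*⟪r, v⟫ + ‖v‖^2) := by
    rw [← norm_sub_sq_real]; positivity
  have hHH : 0 ≤ (1 + t - s - 3*s*t - 2*s*t^2 - 3*s^2 + 2*s^2*t^2 + 3*s^3 + 6*s^3*t + 2*s^3*t^2 + 3*s^4 - 3*s^4*t - 2*s^4*t^2 - 3*s^5 - 3*s^5*t - s^6 + 2*s^6*t + s^7) := H_nonneg s t hγ0 ht0
  have key := key_scalar s t m (‖u‖ ^ 2) (‖v‖ ^ 2) (‖r‖ ^ 2) ⟪u, v⟫ ⟪u, r⟫ ⟪r, v⟫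
    (f x) (f y) (f yp) (f xstar)
  have hRHS : 0 ≤ ((s^2-1)^2 + t*s*(s^2-1)) * (s^2*(s^2-1-t)*(f x - m*s^2/2*(‖u‖^2 - 2*⟪u, r⟫ + ‖r‖^2) - f yp) + s*(s^2-1-t)*(f xstar - f x + m*s^2*(‖u‖^2 - ⟪u, r⟫) - m/2*‖u‖^2) + s*(s-1)*(s^2-1-t)*(f y - f x - m*s^2*(⟪u, v⟫ - ‖u‖^2 - ⟪r, v⟫ + ⟪u, r⟫) - m/2*(‖v‖^2 - 2*⟪u, v⟫ + ‖u‖^2)) + (s-1)*(s^2-1-t)*(f y - f xstar - m/2*‖v‖^2)) + m/2*(s*(((s^2-1)^2 + t*s*(s^2-1))^2*‖u‖^2 - 2*(((s^2-1)^2 + t*s*(s^2-1))*((s-1)*((s^2-1)*(s+1+t))))*⟪u, v⟫ + ((s-1)*((s^2-1)*(s+1+t)))^2*‖v‖^2) + ((s^2-1)^2 + t*s*(s^2-1))*(s^2-(1+t)^2)*(s^3*(s-1))*(‖r‖^2 - 2*⟪r, v⟫ + ‖v‖^2) + (1 + t - s - 3*s*t - 2*s*t^2 - 3*s^2 + 2*s^2*t^2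 + 3*s^3 + 6*s^3*t + 2*s^3*t^2 + 3*s^4 - 3*s^4*t - 2*s^4*t^2 - 3*s^5 - 3*s^5*t - s^6 + 2*s^6*t + s^7)*‖v‖^2) := by
    have p1 : 0 ≤ s^2*(s^2-1-t)*(f x - m*s^2/2*(‖u‖^2 - 2*⟪u, r⟫ + ‖r‖^2) - f yp) := mul_nonneg (mul_nonneg (by positivity) hc1) hD1
    have p2 : 0 ≤ s*(s^2-1-t)*(f xstar - f x + m*s^2*(‖u‖^2 - ⟪u, r⟫) - m/2*‖u‖^2) := mul_nonneg (mul_nonneg hspos.le hc1) hD2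
    have p3 : 0 ≤ s*(s-1)*(s^2-1-t)*(f y - f x - m*s^2*(⟪u, v⟫ - ‖u‖^2 - ⟪r, v⟫ + ⟪u, r⟫) - m/2*(‖v‖^2 - 2*⟪u, v⟫ + ‖u‖^2)) :=
      mul_nonneg (mul_nonneg (mul_nonneg hspos.le hsm1) hc1) hD3
    have p4 : 0 ≤ (s-1)*(s^2-1-t)*(f y - f xstar - m/2*‖v‖^2) := mul_nonneg (mul_nonneg hsm1 hc1) hD4
    have q1 : 0 ≤ s*(((s^2-1)^2 + t*s*(s^2-1))^2*‖u‖^2 - 2*(((s^2-1)^2 + t*s*(s^2-1))*((s-1)*((s^2-1)*(s+1+t))))*⟪u, v⟫ + ((s-1)*((s^2-1)*(s+1+t)))^2*‖v‖^2) := mul_nonneg hspos.le hQ1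
    have q2 : 0 ≤ ((s^2-1)^2 + t*s*(s^2-1))*(s^2-(1+t)^2)*(s^3*(s-1))*(‖r‖^2 - 2*⟪r, v⟫ + ‖v‖^2) := mul_nonneg (mul_nonneg (mul_nonneg hAH.le hFF) hs3) hQ2
    have q3 : 0 ≤ (1 + t - s - 3*s*t - 2*s*t^2 - 3*s^2 + 2*s^2*t^2 + 3*s^3 + 6*s^3*t + 2*s^3*t^2 + 3*s^4 - 3*s^4*t - 2*s^4*t^2 - 3*s^5 - 3*s^5*t - s^6 + 2*s^6*t + s^7)*‖v‖^2 := mul_nonneg hHH (by positivity)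
    exact add_nonneg
      (mul_nonneg hAH.le (add_nonneg (add_nonneg (add_nonneg p1 p2) p3) p4))
      (mul_nonneg (by positivity) (add_nonneg (add_nonneg q1 q2) q3))
  have h0 : 0 ≤ ((s^2-1)^2 + t*s*(s^2-1)) * ((s^2-1)*(s*(s-1)*(f y - f xstar + m/2*((1+s)^2*‖u‖^2 - 2*((1+s)*s)*⟪u, v⟫ + s^2*‖v‖^2)) + (s-1-t)*(f y - f xstar + m*s^2/2*‖v‖^2)) - s^2*(s*(s-1)*(f yp - f xstar + m/2*((1+t)^2*‖r‖^2 - 2*((1+t)*t)*⟪r, v⟫ + t^2*‖v‖^2)) + (s-1-t)*(f yp - f xstar + m*s^2/2*‖r‖^2))) := le_trans hRHS (le_of_eq key.symm)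
  have h2 : s ^ 2 * (s*(s-1)*(f yp - f xstar + m/2*((1+t)^2*‖r‖^2 - 2*((1+t)*t)*⟪r, v⟫ + t^2*‖v‖^2)) + (s-1-t)*(f yp - f xstar + m*s^2/2*‖r‖^2)) ≤ (s ^ 2 - 1) * (s*(s-1)*(f y - f xstar + m/2*((1+s)^2*‖u‖^2 - 2*((1+s)*s)*⟪u, v⟫ + s^2*‖v‖^2)) + (s-1-t)*(f y - f xstar + m*s^2/2*‖v‖^2)) :=
    sub_nonneg.mp ((mul_nonneg_iff_of_pos_left hAH).mp h0)
  have cL : s ^ 3 * (s - 1) * (lyapW f xstar m (Lbar / m) xp yp + w * lyapU f xstar Lbar xp yp)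
      = s ^ 2 * (s*(s-1)*(f yp - f xstar + m/2*((1+t)^2*‖r‖^2 - 2*((1+t)*t)*⟪r, v⟫ + t^2*‖v‖^2)) + (s-1-t)*(f yp - f xstar + m*s^2/2*‖r‖^2)) := by
    rw [eWp, eUp, hw']
    conv_lhs => rw [mul_add, hwmul]
    ring
  have cR : s ^ 3 * (s - 1) * ((s ^ 2 - 1) / s ^ 2 *
        (lyapW f xstar m (Lbar / m) x y + w * lyapU f xstar Lbar x y))
      = (s ^ 2 - 1) * (s*(s-1)*(f y - f xstar + m/2*((1+s)^2*‖u‖^2 - 2*((1+s)*s)*⟪u, v⟫ + s^2*‖v‖^2)) + (s-1-t)*(f y - f xstar + m*s^2/2*‖v‖^2)) := by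
    rw [eW, eU, hw']
    conv_lhs => rw [hrmul, mul_add, hwmul2]
    all_goals ring
  rw [hρ]
  refine le_of_mul_le_mul_left ?_ hpos3
  rw [cL, cR]
  exact h2

set_option maxHeartbeats 1000000 in
theorem stmt5
    {d : ℕ} (hd : 1 ≤ d)
    {L m : ℝ} (hm : 0 < m) (hmL : m ≤ L)
    (f : EuclideanSpace ℝ (Fin d) → ℝ)
    (hdiff : Differentiable ℝ f)
    (hsmooth : ∀ x y : EuclideanSpace ℝ (Fin d),
      f y ≤ f x + ⟪gradient f x, y - x⟫ + L / 2 * ‖y - x‖ ^ 2)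
    (hstrong : ∀ x y : EuclideanSpace ℝ (Fin d),
      f x + ⟪gradient f x, y - x⟫ + m / 2 * ‖y - x‖ ^ 2 ≤ f y)
    (xstar : EuclideanSpace ℝ (Fin d)) (hmin : ∀ z, f xstar ≤ f z)
    {Lbar : ℝ} (hLbarL : L ≤ Lbar) (hkappa : 1 < Lbar / m)
    (x y : ℕ → EuclideanSpace ℝ (Fin d)) (mseq : ℕ → ℝ)
    (hxy0 : x 0 = y 0) (hmseq0 : mseq 0 ∈ Set.Icc m L)
    (hy : ∀ t, y (t + 1) = x t - (1 / Lbar) • gradient f (x t))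
    (hx : ∀ t, x (t + 1) = y (t + 1) +
      ((Real.sqrt (Lbar / mseq t) - 1) / (Real.sqrt (Lbar / mseq t) + 1)) • (y (t + 1) - y t))
    (hmrec : ∀ t, mseq (t + 1) =
      if x (t + 1) = x t then mseq t
      else min (mseq t) (‖gradient f (x (t + 1)) - gradient f (x t)‖ / ‖x (t + 1) - x t‖)) :
    ∀ t : ℕ,
      lyapW f xstar m (Lbar / m) (x (t + 1)) (y (t + 1)) +
        ((1 - ((Real.sqrt (Lbar / mseq t) - 1) / (Real.sqrt (Lbar / mseq t) + 1)) /
              ((Real.sqrt (Lbar / m) - 1) / (Real.sqrt (Lbar / m) + 1))) / Real.sqrt (Lbar / m)) *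
          lyapU f xstar Lbar (x (t + 1)) (y (t + 1))
      ≤ 2 * Lbar * ((Lbar / m - 1) / (Lbar / m)) ^ t * ‖x 0 - xstar‖ ^ 2 := by
  have hL0 : (0:ℝ) < Lbar := lt_of_lt_of_le hm (hmL.trans hLbarL)
  have hLpos : (0:ℝ) < L := lt_of_lt_of_le hm hmL
  have hκ0 : (0:ℝ) < Lbar / m := div_pos hL0 hm
  -- gradient vanishes at the minimizer
  have hgrad0 : gradient f xstar = 0 := by
    by_contra hne
    have hgpos : (0:ℝ) < ‖gradient f xstar‖ := norm_pos_iff.mpr hne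
    have h := hsmooth xstar (xstar - (1/L) • gradient f xstar)
    have e1 : xstar - (1/L) • gradient f xstar - xstar = -((1/L) • gradient f xstar) := by
      module
    rw [e1, inner_neg_right, real_inner_smul_right, real_inner_self_eq_norm_sq, norm_neg,
      norm_smul, Real.norm_eq_abs, abs_of_pos (by positivity : (0:ℝ) < 1/L)] at h
    have e2 : L / 2 * (1/L * ‖gradient f xstar‖) ^ 2 = 1/L * ‖gradient f xstar‖ ^ 2 / 2 := by
      field_simp
    rw [e2] at h
    have hmin' := hmin (xstar - (1/L) • gradient f xstar)
    have hX : (0:ℝ) < 1/L * ‖gradient f xstar‖ ^ 2 := by positivity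
    linarith [h, hmin', hX]
  -- mseq stays in [m, L]
  have hms : ∀ n, m ≤ mseq n ∧ mseq n ≤ L := by
    intro n
    induction n with
    | zero => exact ⟨hmseq0.1, hmseq0.2⟩
    | succ k ih =>
      rw [hmrec k]
      split_ifs with hcase
      · exact ih
      · refine ⟨le_min ih.1 ?_, le_trans (min_le_left _ _) ih.2⟩
        have hΔ : (0:ℝ) < ‖x (k+1) - x k‖ := by
          rw [norm_pos_iff, sub_ne_zero]; exact hcase
        have h1 := hstrong (x k) (x (k+1))
        have h2 := hstrong (x (k+1)) (x k)
        have e1 : x k - x (k+1) = -(x (k+1) - x k) := by module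
        rw [e1, inner_neg_right, norm_neg] at h2
        have h3 : m * ‖x (k+1) - x k‖ ^ 2 ≤
            ⟪gradient f (x (k+1)) - gradient f (x k), x (k+1) - x k⟫ := by
          rw [inner_sub_left]; linarith
        have h4 := real_inner_le_norm (gradient f (x (k+1)) - gradient f (x k)) (x (k+1) - x k)
        rw [le_div_iff₀ hΔ]
        nlinarith [h3, h4, hΔ]
  have hmono : ∀ n, mseq (n+1) ≤ mseq n := by
    intro n; rw [hmrec n]; split_ifs
    · exact le_rfl
    · exact min_le_left _ _
  have hmpos : ∀ n, 0 < mseq n := fun n => lt_of_lt_of_le hm (hms n).1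
  have hs2 : Real.sqrt (Lbar / m) ^ 2 = Lbar / m := Real.sq_sqrt hκ0.le
  have hs0 : (0:ℝ) ≤ Real.sqrt (Lbar / m) := Real.sqrt_nonneg _
  have hs1 : 1 < Real.sqrt (Lbar / m) := by nlinarith [hs2, hkappa]
  have hθ : (0:ℝ) < (Real.sqrt (Lbar / m) - 1) / (Real.sqrt (Lbar / m) + 1) := by
    apply div_pos <;> linarith
  have hσ1 : ∀ n, 1 ≤ Real.sqrt (Lbar / mseq n) := by
    intro n
    have h1 : 1 ≤ Lbar / mseq n := by
      rw [le_div_iff₀ (hmpos n), one_mul]; exact le_trans (hms n).2 hLbarL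
    nlinarith [Real.sq_sqrt (by positivity : (0:ℝ) ≤ Lbar / mseq n),
      Real.sqrt_nonneg (Lbar / mseq n), h1]
  have hσs : ∀ n, Real.sqrt (Lbar / mseq n) ≤ Real.sqrt (Lbar / m) := by
    intro n
    apply Real.sqrt_le_sqrt
    rw [div_le_div_iff₀ (hmpos n) hm]
    nlinarith [(hms n).1, hL0]
  have hβ0 : ∀ n, 0 ≤ (Real.sqrt (Lbar / mseq n) - 1) / (Real.sqrt (Lbar / mseq n) + 1) := by
    intro n; apply div_nonneg <;> linarith [hσ1 n]
  have hβθ : ∀ n, ((Real.sqrt (Lbar / mseq n) - 1) / (Real.sqrt (Lbar / mseq n) + 1)) *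
      (Real.sqrt (Lbar / m) + 1) ≤ Real.sqrt (Lbar / m) - 1 := by
    intro n
    rw [div_mul_eq_mul_div, div_le_iff₀ (by linarith [hσ1 n] :
      (0:ℝ) < Real.sqrt (Lbar / mseq n) + 1)]
    nlinarith [hσ1 n, hσs n, hs1]
  have hweq : ∀ n : ℕ,
      (1 - (Real.sqrt (Lbar / mseq n) - 1) / (Real.sqrt (Lbar / mseq n) + 1) /
          ((Real.sqrt (Lbar / m) - 1) / (Real.sqrt (Lbar / m) + 1))) / Real.sqrt (Lbar / m)
      = (1 - ((Real.sqrt (Lbar / mseq n) - 1) / (Real.sqrt (Lbar / mseq n) + 1)) *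
          (Real.sqrt (Lbar / m) + 1) / (Real.sqrt (Lbar / m) - 1)) / Real.sqrt (Lbar / m) := by
    intro n; rw [div_div_eq_mul_div]
  have hstep : ∀ n : ℕ,
      lyapW f xstar m (Lbar / m) (x (n + 1)) (y (n + 1)) +
        ((1 - ((Real.sqrt (Lbar / mseq n) - 1) / (Real.sqrt (Lbar / mseq n) + 1)) /
              ((Real.sqrt (Lbar / m) - 1) / (Real.sqrt (Lbar / m) + 1))) / Real.sqrt (Lbar / m)) *
          lyapU f xstar Lbar (x (n + 1)) (y (n + 1)) ≤
      (Lbar / m - 1) / (Lbar / m) *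
        (lyapW f xstar m (Lbar / m) (x n) (y n) +
          ((1 - ((Real.sqrt (Lbar / mseq n) - 1) / (Real.sqrt (Lbar / mseq n) + 1)) /
                ((Real.sqrt (Lbar / m) - 1) / (Real.sqrt (Lbar / m) + 1))) / Real.sqrt (Lbar / m)) *
            lyapU f xstar Lbar (x n) (y n)) := by
    intro n
    exact step_lemma hm hmL hLbarL hkappa f hsmooth hstrong xstar hgrad0
      (x n) (y n) (y (n+1)) (x (n+1)) _ _ (hy n) (hx n) (hβ0 n) (hβθ n) (hweq n)
  have hρ0 : 0 ≤ (Lbar / m - 1) / (Lbar / m) := div_nonneg (by linarith) hκ0.le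
  have hρ1 : (Lbar / m - 1) / (Lbar / m) ≤ 1 := by
    rw [div_le_one hκ0]; linarith
  have hUnn : ∀ a b : EuclideanSpace ℝ (Fin d), 0 ≤ lyapU f xstar Lbar a b := by
    intro a b; simp only [lyapU]
    exact add_nonneg (sub_nonneg.mpr (hmin b)) (by positivity)
  have hWnn : ∀ a b : EuclideanSpace ℝ (Fin d), 0 ≤ lyapW f xstar m (Lbar / m) a b := by
    intro a b; simp only [lyapW]
    exact add_nonneg (sub_nonneg.mpr (hmin b)) (by positivity)
  have hw0 : ∀ n, 0 ≤ (1 - ((Real.sqrt (Lbar / mseq n) - 1) / (Real.sqrt (Lbar / mseq n) + 1)) /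
      ((Real.sqrt (Lbar / m) - 1) / (Real.sqrt (Lbar / m) + 1))) / Real.sqrt (Lbar / m) := by
    intro n
    apply div_nonneg _ hs0
    have h1 : ((Real.sqrt (Lbar / mseq n) - 1) / (Real.sqrt (Lbar / mseq n) + 1)) /
        ((Real.sqrt (Lbar / m) - 1) / (Real.sqrt (Lbar / m) + 1)) ≤ 1 := by
      rw [div_le_one hθ, le_div_iff₀ (by linarith : (0:ℝ) < Real.sqrt (Lbar / m) + 1)]
      linarith [hβθ n]
    linarith
  have hw1 : ∀ n, (1 - ((Real.sqrt (Lbar / mseq n) - 1) / (Real.sqrt (Lbar / mseq n) + 1)) /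
      ((Real.sqrt (Lbar / m) - 1) / (Real.sqrt (Lbar / m) + 1))) / Real.sqrt (Lbar / m) ≤ 1 := by
    intro n
    rw [div_le_one (by linarith : (0:ℝ) < Real.sqrt (Lbar / m))]
    have h1 : 0 ≤ ((Real.sqrt (Lbar / mseq n) - 1) / (Real.sqrt (Lbar / mseq n) + 1)) /
        ((Real.sqrt (Lbar / m) - 1) / (Real.sqrt (Lbar / m) + 1)) :=
      div_nonneg (hβ0 n) hθ.le
    linarith
  have hwmono : ∀ n, (1 - ((Real.sqrt (Lbar / mseq (n+1)) - 1) / (Real.sqrt (Lbar / mseq (n+1)) + 1)) /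
        ((Real.sqrt (Lbar / m) - 1) / (Real.sqrt (Lbar / m) + 1))) / Real.sqrt (Lbar / m)
      ≤ (1 - ((Real.sqrt (Lbar / mseq n) - 1) / (Real.sqrt (Lbar / mseq n) + 1)) /
        ((Real.sqrt (Lbar / m) - 1) / (Real.sqrt (Lbar / m) + 1))) / Real.sqrt (Lbar / m) := by
    intro n
    have hm1 : Real.sqrt (Lbar / mseq n) ≤ Real.sqrt (Lbar / mseq (n+1)) := by
      apply Real.sqrt_le_sqrt
      rw [div_le_div_iff₀ (hmpos n) (hmpos (n+1))]
      nlinarith [hmono n, hL0]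
    have hβm : (Real.sqrt (Lbar / mseq n) - 1) / (Real.sqrt (Lbar / mseq n) + 1)
        ≤ (Real.sqrt (Lbar / mseq (n+1)) - 1) / (Real.sqrt (Lbar / mseq (n+1)) + 1) := by
      rw [div_le_div_iff₀ (by linarith [hσ1 n] : (0:ℝ) < Real.sqrt (Lbar / mseq n) + 1)
        (by linarith [hσ1 (n+1)] : (0:ℝ) < Real.sqrt (Lbar / mseq (n+1)) + 1)]
      nlinarith [hσ1 n, hm1]
    have hq : (Real.sqrt (Lbar / mseq n) - 1) / (Real.sqrt (Lbar / mseq n) + 1) /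
          ((Real.sqrt (Lbar / m) - 1) / (Real.sqrt (Lbar / m) + 1))
        ≤ (Real.sqrt (Lbar / mseq (n+1)) - 1) / (Real.sqrt (Lbar / mseq (n+1)) + 1) /
          ((Real.sqrt (Lbar / m) - 1) / (Real.sqrt (Lbar / m) + 1)) :=
      (div_le_div_iff_of_pos_right hθ).mpr hβm
    exact (div_le_div_iff_of_pos_right (by linarith : (0:ℝ) < Real.sqrt (Lbar / m))).mpr (by linarith)
  intro T
  induction T with
  | zero =>
    have h1 := hstep 0
    have hWx0 : lyapW f xstar m (Lbar / m) (x 0) (y 0)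
        = f (x 0) - f xstar + m / 2 * ‖x 0 - xstar‖ ^ 2 := by
      rw [← hxy0]; simp only [lyapW]; rw [sub_self, smul_zero, add_zero]
    have hUx0 : lyapU f xstar Lbar (x 0) (y 0)
        = f (x 0) - f xstar + Lbar / 2 * ‖x 0 - xstar‖ ^ 2 := by
      rw [← hxy0]; simp only [lyapU]
    have hfx0 : f (x 0) - f xstar ≤ Lbar / 2 * ‖x 0 - xstar‖ ^ 2 := by
      have h := hsmooth xstar (x 0)
      rw [hgrad0, inner_zero_left] at h
      linarith [h, mul_le_mul_of_nonneg_right hLbarL (sq_nonneg ‖x 0 - xstar‖)]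
    have hU0nn : (0:ℝ) ≤ f (x 0) - f xstar + Lbar / 2 * ‖x 0 - xstar‖ ^ 2 :=
      add_nonneg (sub_nonneg.mpr (hmin (x 0))) (by positivity)
    have hV0 : lyapW f xstar m (Lbar / m) (x 0) (y 0) +
        ((1 - ((Real.sqrt (Lbar / mseq 0) - 1) / (Real.sqrt (Lbar / mseq 0) + 1)) /
              ((Real.sqrt (Lbar / m) - 1) / (Real.sqrt (Lbar / m) + 1))) / Real.sqrt (Lbar / m)) *
          lyapU f xstar Lbar (x 0) (y 0) ≤ 2 * Lbar * ‖x 0 - xstar‖ ^ 2 := by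
      rw [hWx0, hUx0]
      have h2 := mul_le_mul_of_nonneg_right (hw1 0) hU0nn
      rw [one_mul] at h2
      have h3 := mul_le_mul_of_nonneg_right (show m ≤ Lbar by linarith) (sq_nonneg ‖x 0 - xstar‖)
      linarith [hfx0, h2, h3]
    have hV0nn : 0 ≤ lyapW f xstar m (Lbar / m) (x 0) (y 0) +
        ((1 - ((Real.sqrt (Lbar / mseq 0) - 1) / (Real.sqrt (Lbar / mseq 0) + 1)) /
              ((Real.sqrt (Lbar / m) - 1) / (Real.sqrt (Lbar / m) + 1))) / Real.sqrt (Lbar / m)) *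
          lyapU f xstar Lbar (x 0) (y 0) :=
      add_nonneg (hWnn _ _) (mul_nonneg (hw0 0) (hUnn _ _))
    calc lyapW f xstar m (Lbar / m) (x (0 + 1)) (y (0 + 1)) +
        ((1 - ((Real.sqrt (Lbar / mseq 0) - 1) / (Real.sqrt (Lbar / mseq 0) + 1)) /
              ((Real.sqrt (Lbar / m) - 1) / (Real.sqrt (Lbar / m) + 1))) / Real.sqrt (Lbar / m)) *
          lyapU f xstar Lbar (x (0 + 1)) (y (0 + 1))
        ≤ (Lbar / m - 1) / (Lbar / m) *
            (lyapW f xstar m (Lbar / m) (x 0) (y 0) +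
              ((1 - ((Real.sqrt (Lbar / mseq 0) - 1) / (Real.sqrt (Lbar / mseq 0) + 1)) /
                    ((Real.sqrt (Lbar / m) - 1) / (Real.sqrt (Lbar / m) + 1))) / Real.sqrt (Lbar / m)) *
                lyapU f xstar Lbar (x 0) (y 0)) := h1
      _ ≤ 1 * (lyapW f xstar m (Lbar / m) (x 0) (y 0) +
              ((1 - ((Real.sqrt (Lbar / mseq 0) - 1) / (Real.sqrt (Lbar / mseq 0) + 1)) /
                    ((Real.sqrt (Lbar / m) - 1) / (Real.sqrt (Lbar / m) + 1))) / Real.sqrt (Lbar / m)) *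
                lyapU f xstar Lbar (x 0) (y 0)) := mul_le_mul_of_nonneg_right hρ1 hV0nn
      _ = lyapW f xstar m (Lbar / m) (x 0) (y 0) +
              ((1 - ((Real.sqrt (Lbar / mseq 0) - 1) / (Real.sqrt (Lbar / mseq 0) + 1)) /
                    ((Real.sqrt (Lbar / m) - 1) / (Real.sqrt (Lbar / m) + 1))) / Real.sqrt (Lbar / m)) *
                lyapU f xstar Lbar (x 0) (y 0) := one_mul _
      _ ≤ 2 * Lbar * ‖x 0 - xstar‖ ^ 2 := hV0
      _ = 2 * Lbar * ((Lbar / m - 1) / (Lbar / m)) ^ 0 * ‖x 0 - xstar‖ ^ 2 := by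
          rw [pow_zero]; ring
  | succ n ih =>
    have h1 := hstep (n + 1)
    have h2 : lyapW f xstar m (Lbar / m) (x (n + 1)) (y (n + 1)) +
        ((1 - ((Real.sqrt (Lbar / mseq (n+1)) - 1) / (Real.sqrt (Lbar / mseq (n+1)) + 1)) /
              ((Real.sqrt (Lbar / m) - 1) / (Real.sqrt (Lbar / m) + 1))) / Real.sqrt (Lbar / m)) *
          lyapU f xstar Lbar (x (n + 1)) (y (n + 1))
        ≤ lyapW f xstar m (Lbar / m) (x (n + 1)) (y (n + 1)) +
        ((1 - ((Real.sqrt (Lbar / mseq n) - 1) / (Real.sqrt (Lbar / mseq n) + 1)) /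
              ((Real.sqrt (Lbar / m) - 1) / (Real.sqrt (Lbar / m) + 1))) / Real.sqrt (Lbar / m)) *
          lyapU f xstar Lbar (x (n + 1)) (y (n + 1)) := by
      have h3 := mul_le_mul_of_nonneg_right (hwmono n) (hUnn (x (n + 1)) (y (n + 1)))
      linarith
    calc lyapW f xstar m (Lbar / m) (x (n + 1 + 1)) (y (n + 1 + 1)) +
        ((1 - ((Real.sqrt (Lbar / mseq (n+1)) - 1) / (Real.sqrt (Lbar / mseq (n+1)) + 1)) /
              ((Real.sqrt (Lbar / m) - 1) / (Real.sqrt (Lbar / m) + 1))) / Real.sqrt (Lbar / m)) *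
          lyapU f xstar Lbar (x (n + 1 + 1)) (y (n + 1 + 1))
        ≤ (Lbar / m - 1) / (Lbar / m) *
            (lyapW f xstar m (Lbar / m) (x (n + 1)) (y (n + 1)) +
              ((1 - ((Real.sqrt (Lbar / mseq (n+1)) - 1) / (Real.sqrt (Lbar / mseq (n+1)) + 1)) /
                    ((Real.sqrt (Lbar / m) - 1) / (Real.sqrt (Lbar / m) + 1))) / Real.sqrt (Lbar / m)) *
                lyapU f xstar Lbar (x (n + 1)) (y (n + 1))) := h1
      _ ≤ (Lbar / m - 1) / (Lbar / m) *
            (lyapW f xstar m (Lbar / m) (x (n + 1)) (y (n + 1)) +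
              ((1 - ((Real.sqrt (Lbar / mseq n) - 1) / (Real.sqrt (Lbar / mseq n) + 1)) /
                    ((Real.sqrt (Lbar / m) - 1) / (Real.sqrt (Lbar / m) + 1))) / Real.sqrt (Lbar / m)) *
                lyapU f xstar Lbar (x (n + 1)) (y (n + 1))) :=
          mul_le_mul_of_nonneg_left h2 hρ0
      _ ≤ (Lbar / m - 1) / (Lbar / m) *
            (2 * Lbar * ((Lbar / m - 1) / (Lbar / m)) ^ n * ‖x 0 - xstar‖ ^ 2) :=
          mul_le_mul_of_nonneg_left ih hρ0
      _ = 2 * Lbar * ((Lbar / m - 1) / (Lbar / m)) ^ (n + 1) * ‖x 0 - xstar‖ ^ 2 := by ring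
end

section
/- Let d ≥ 1, let f ∈ F(L,m) with unique minimizer x*, and let L̄ ≥ L. Let x_t, y_t ∈ ℝ^d and let m_t be a positive real with m_t ≤ m and m_t < L̄; set κ̄_t = L̄/m_t, β_t = (√κ̄_t − 1)/(√κ̄_t + 1), y_{t+1} = x_t − (1/L̄)∇f(x_t), x_{t+1} = y_{t+1} + β_t (y_{t+1} − y_t). Then (1 + 1/(√κ̄_t − 1)) V(x_{t+1}, y_{t+1}) − V(x_t, y_t) ≤ 0, where V(x, y) = f(y) − f(x*) + (m_t/2)‖x + √κ̄_t (x − y) − x*‖². -/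
set_option maxHeartbeats 1000000
set_option synthInstance.maxHeartbeats 400000


open scoped RealInnerProductSpace

/-- Accelerated descent of the Lyapunov function when the
estimate underestimates `m`: if `0 < m_t ≤ m`, `m_t < L̄`, `κ̄_t = L̄/m_t`,
`β_t = (√κ̄_t − 1)/(√κ̄_t + 1)`, `y_{t+1} = x_t − (1/L̄)∇f(x_t)`,
`x_{t+1} = y_{t+1} + β_t(y_{t+1} − y_t)`, then
`(1 + 1/(√κ̄_t − 1)) V(x_{t+1}, y_{t+1}) − V(x_t, y_t) ≤ 0`,
where `V(x, y) = f(y) − f(x*) + (m_t/2)‖x + √κ̄_t (x − y) − x*‖²`. -/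
theorem stmt6
    {d : ℕ} (hd : 1 ≤ d)
    {L m : ℝ} (hm : 0 < m) (hmL : m ≤ L)
    (f : EuclideanSpace ℝ (Fin d) → ℝ)
    (hdiff : Differentiable ℝ f)
    (hsmooth : ∀ x y : EuclideanSpace ℝ (Fin d),
      f y ≤ f x + ⟪gradient f x, y - x⟫ + L / 2 * ‖y - x‖ ^ 2)
    (hstrong : ∀ x y : EuclideanSpace ℝ (Fin d),
      f x + ⟪gradient f x, y - x⟫ + m / 2 * ‖y - x‖ ^ 2 ≤ f y)
    (xstar : EuclideanSpace ℝ (Fin d)) (hmin : ∀ z, f xstar ≤ f z)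
    {Lbar : ℝ} (hLbarL : L ≤ Lbar)
    {mt : ℝ} (hmt0 : 0 < mt) (hmtm : mt ≤ m) (hmtL : mt < Lbar)
    (xt yt : EuclideanSpace ℝ (Fin d))
    (y1 : EuclideanSpace ℝ (Fin d)) (hy1 : y1 = xt - (1 / Lbar) • gradient f xt)
    (x1 : EuclideanSpace ℝ (Fin d))
    (hx1 : x1 = y1 +
      ((Real.sqrt (Lbar / mt) - 1) / (Real.sqrt (Lbar / mt) + 1)) • (y1 - yt)) :
    (1 + 1 / (Real.sqrt (Lbar / mt) - 1)) *
        (f y1 - f xstar + mt / 2 * ‖x1 + Real.sqrt (Lbar / mt) • (x1 - y1) - xstar‖ ^ 2)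
      - (f yt - f xstar + mt / 2 * ‖xt + Real.sqrt (Lbar / mt) • (xt - yt) - xstar‖ ^ 2)
      ≤ 0 := by
  have hLbar : 0 < Lbar := hmt0.trans hmtL
  set s : ℝ := Real.sqrt (Lbar / mt) with hs
  have hdivpos : (0:ℝ) < Lbar / mt := div_pos hLbar hmt0
  have hs2 : s ^ 2 = Lbar / mt := Real.sq_sqrt hdivpos.le
  have hs1 : 1 < s := by
    rw [hs, show (1:ℝ) = Real.sqrt 1 by simp]
    exact Real.sqrt_lt_sqrt (by norm_num) ((one_lt_div hmt0).mpr hmtL)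
  have hs0 : 0 < s := by linarith
  have hsne : s + 1 ≠ 0 := by positivity
  have hLne : Lbar ≠ 0 := ne_of_gt hLbar
  set g : EuclideanSpace ℝ (Fin d) := gradient f xt with hg
  set a : EuclideanSpace ℝ (Fin d) := xt - xstar with ha
  set c : EuclideanSpace ℝ (Fin d) := xt - yt with hc
  set u : ℝ := 1 / Lbar with hu
  have hu0 : 0 < u := by positivity
  have huL : Lbar * u = 1 := by rw [hu]; field_simp
  set t : ℝ := s * u with ht
  have htm : mt * s * t = 1 := by
    have h : mt * s ^ 2 = Lbar := by
      rw [hs2]; field_simp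
    calc mt * s * t = mt * s ^ 2 * u := by rw [ht]; ring
    _ = Lbar * u := by rw [h]
    _ = 1 := huL
  -- vector identities
  have hZnew : x1 + s • (x1 - y1) - xstar = a + (s - 1) • c - t • g := by
    rw [hx1, hy1, ha, hc, ht, hu]
    match_scalars <;> field_simp <;> ring
  have hZold : xt + s • (xt - yt) - xstar = a + s • c := by
    rw [ha, hc]; module
  -- norm expansions
  have hN1 : ‖a + (s - 1) • c - t • g‖ ^ 2
      = ‖a‖ ^ 2 + (s - 1) ^ 2 * ‖c‖ ^ 2 + t ^ 2 * ‖g‖ ^ 2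
        + 2 * (s - 1) * ⟪a, c⟫ - 2 * t * ⟪g, a⟫ - 2 * (s - 1) * t * ⟪g, c⟫ := by
    rw [← real_inner_self_eq_norm_sq, ← real_inner_self_eq_norm_sq,
      ← real_inner_self_eq_norm_sq, ← real_inner_self_eq_norm_sq]
    simp only [inner_sub_left, inner_sub_right, inner_add_left, inner_add_right,
      inner_smul_left, inner_smul_right, conj_trivial]
    rw [real_inner_comm c a, real_inner_comm a g, real_inner_comm c g]
    ring
  have hN2 : ‖a + s • c‖ ^ 2 = ‖a‖ ^ 2 + 2 * s * ⟪a, c⟫ + s ^ 2 * ‖c‖ ^ 2 := by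
    rw [← real_inner_self_eq_norm_sq, ← real_inner_self_eq_norm_sq,
      ← real_inner_self_eq_norm_sq]
    simp only [inner_add_left, inner_add_right, inner_smul_left, inner_smul_right,
      conj_trivial]
    rw [real_inner_comm c a]
    ring
  -- scalar inequalities
  have hy1xt : y1 - xt = -(u • g) := by rw [hy1, hu]; module
  have e1 : ⟪g, y1 - xt⟫ = -(u * ‖g‖ ^ 2) := by
    rw [hy1xt, inner_neg_right, inner_smul_right, real_inner_self_eq_norm_sq]
  have e2 : ‖y1 - xt‖ ^ 2 = u ^ 2 * ‖g‖ ^ 2 := by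
    rw [hy1xt, norm_neg, norm_smul, mul_pow, Real.norm_eq_abs, sq_abs]
  have hsm := hsmooth xt y1
  rw [e1, e2] at hsm
  have hLu : L * u ≤ 1 := by
    calc L * u ≤ Lbar * u := by nlinarith
    _ = 1 := huL
  have step : f y1 ≤ f xt - u / 2 * ‖g‖ ^ 2 := by
    have hint : (0:ℝ) ≤ (1 - L * u) * (u * ‖g‖ ^ 2) :=
      mul_nonneg (by linarith) (mul_nonneg hu0.le (sq_nonneg _))
    nlinarith [hsm, hint]
  have h1 : s * f y1 ≤ s * f xt - t / 2 * ‖g‖ ^ 2 := by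
    have := mul_le_mul_of_nonneg_left step hs0.le
    have hexp : s * (f xt - u / 2 * ‖g‖ ^ 2) = s * f xt - t / 2 * ‖g‖ ^ 2 := by
      rw [ht]; ring
    linarith [hexp ▸ this]
  have h2 : f xt - f xstar + mt / 2 * ‖a‖ ^ 2 ≤ ⟪g, a⟫ := by
    have hstr := hstrong xt xstar
    have hrw : xstar - xt = -a := by rw [ha]; module
    rw [hrw, inner_neg_right, norm_neg] at hstr
    have hint : (0:ℝ) ≤ (m - mt) * ‖a‖ ^ 2 :=
      mul_nonneg (by linarith) (sq_nonneg _)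
    nlinarith [hstr, hint]
  have h3 : f xt - f yt ≤ ⟪g, c⟫ := by
    have hstr := hstrong xt yt
    have hrw : yt - xt = -c := by rw [hc]; module
    rw [hrw, inner_neg_right, norm_neg] at hstr
    nlinarith [hstr, sq_nonneg ‖c‖, hm]
  have H3 : (s - 1) * (f xt - f yt) ≤ (s - 1) * ⟪g, c⟫ :=
    mul_le_mul_of_nonneg_left h3 (by linarith)
  have slack : (0:ℝ) ≤ mt / 2 * s * (s - 1) * ‖c‖ ^ 2 :=
    mul_nonneg (mul_nonneg (mul_nonneg (by positivity) hs0.le) (by linarith)) (sq_nonneg _)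
  rw [hZnew, hZold, hN1, hN2]
  set A := ‖a‖ ^ 2
  set C := ‖c‖ ^ 2
  set G := ‖g‖ ^ 2
  set P := (⟪a, c⟫ : ℝ)
  set Q := (⟪g, a⟫ : ℝ)
  set R := (⟪g, c⟫ : ℝ)
  set V1 : ℝ := f y1 - f xstar + mt / 2 * (A + (s - 1) ^ 2 * C + t ^ 2 * G
        + 2 * (s - 1) * P - 2 * t * Q - 2 * (s - 1) * t * R) with hV1
  set V2 : ℝ := f yt - f xstar + mt / 2 * (A + 2 * s * P + s ^ 2 * C) with hV2
  have main : s * V1 - (s - 1) * V2 ≤ 0 := by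
    have key : s * V1 - (s - 1) * V2
        = (s * f y1 - (s * f xt - t / 2 * G))
          + (f xt - f xstar + mt / 2 * A - Q)
          + ((s - 1) * (f xt - f yt) - (s - 1) * R)
          - mt / 2 * s * (s - 1) * C := by
      rw [hV1, hV2]
      linear_combination (t / 2 * G - Q - (s - 1) * R) * htm
    rw [key]
    linarith [h1, h2, H3, slack]
  have hsm1 : s - 1 ≠ 0 := by linarith
  have hfinal : (1 + 1 / (s - 1)) * V1 - V2 = (1 / (s - 1)) * (s * V1 - (s - 1) * V2) := by
    field_simp
    ring
  rw [hfinal]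
  have hpos : (0:ℝ) < 1 / (s - 1) := div_pos one_pos (by linarith)
  exact mul_nonpos_of_nonneg_of_nonpos hpos.le main
end

section
/- Let d ≥ 1, let f ∈ F(L,m) with unique minimizer x*, and let L̄ ≥ L. For a > 0 define V_a(x, y) = f(y) − f(x*) + (a/2)‖x + √(L̄/a)(x − y) − x*‖². If 0 < b ≤ a and b < m, then for all x, y ∈ ℝ^d, V_b(x, y) ≤ (a/b)² V_a(x, y). -/
open scoped RealInnerProductSpace

private theorem keysc (p q r m : ℝ) (hq : 0 < q) (hpq : q ≤ p) (hr : 0 ≤ r) (hmq : q^2 ≤ m) :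
    (p^5*r - q^5*r - (p^4-q^4)*m)^2 ≤ (p^6-q^6+(p^4-q^4)*m) * ((p^4-q^4)*(r^2+m)) := by
  have hm0 : (0:ℝ) ≤ m := (sq_nonneg q).trans hmq
  have hp0 : (0:ℝ) < p := hq.trans_le hpq
  have h4 : q^4 ≤ p^4 := pow_le_pow_left₀ hq.le hpq 4
  have h5 : q^5 ≤ p^5 := pow_le_pow_left₀ hq.le hpq 5
  have h6 : q^6 ≤ p^6 := pow_le_pow_left₀ hq.le hpq 6
  have key1 : p^2*q*(p-q) ≤ p^4 - q^4 := by
    nlinarith [mul_nonneg (sub_nonneg.2 hpq) (mul_pos hq (mul_pos hq hq)).le,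
      mul_nonneg (sub_nonneg.2 hpq) (mul_pos hp0 (mul_pos hq hq)).le,
      mul_nonneg (sub_nonneg.2 hpq) (mul_pos hp0 (mul_pos hp0 hp0)).le]
  have key1' : (0:ℝ) ≤ p^2*q*(p-q) :=
    mul_nonneg (mul_nonneg (sq_nonneg p) hq.le) (sub_nonneg.2 hpq)
  have key2 : p^4*q^4*(p-q)^2 ≤ q^2*(p^4-q^4)^2 := by
    have h := mul_self_le_mul_self key1' key1
    calc p^4*q^4*(p-q)^2 = (p^2*q*(p-q)) * (p^2*q*(p-q)) * q^2 := by ring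
      _ ≤ (p^4-q^4)*(p^4-q^4) * q^2 := mul_le_mul_of_nonneg_right h (sq_nonneg q)
      _ = q^2*(p^4-q^4)^2 := by ring
  have key3 : q^2*(p^4-q^4)^2 ≤ m*(p^4-q^4)^2 :=
    mul_le_mul_of_nonneg_right hmq (sq_nonneg _)
  have t1 : (0:ℝ) ≤ m*(p^4-q^4)*((p^6-q^6) + 2*r*(p^5-q^5)) := by
    apply mul_nonneg (mul_nonneg hm0 (sub_nonneg.2 h4))
    have := mul_nonneg hr (sub_nonneg.2 h5)
    linarith [sub_nonneg.2 h6]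
  have t2 : (0:ℝ) ≤ m*(p^4-q^4)^2*r^2 - r^2*p^4*q^4*(p-q)^2 := by
    have h : p^4*q^4*(p-q)^2 ≤ m*(p^4-q^4)^2 := key2.trans key3
    nlinarith [mul_le_mul_of_nonneg_right h (sq_nonneg r)]
  nlinarith [t1, t2]

private theorem absc (A B C U V W : ℝ) (hA : 0 ≤ A) (hC : 0 ≤ C) (hB : B^2 ≤ A*C)
    (hU : 0 ≤ U) (hV : 0 ≤ V) (hW : W^2 ≤ U*V) :
    0 ≤ A*U + 2*B*W + C*V := by
  nlinarith [mul_nonneg (sub_nonneg.2 hB) (sub_nonneg.2 hW), sq_nonneg (A*U - C*V),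
    sq_nonneg (A*U + C*V), mul_nonneg hA hU, mul_nonneg hC hV, sq_nonneg (B*W),
    sq_nonneg (A*U + C*V + 2*B*W)]

set_option maxHeartbeats 1000000 in
/-- Controlled growth of the (NAG) Lyapunov function when the
strong-convexity estimate decreases: with
`V_a(x, y) = f(y) − f(x*) + (a/2)‖x + √(L̄/a)(x − y) − x*‖²`, if
`0 < b ≤ a` and `b < m`, then `V_b(x, y) ≤ (a/b)² V_a(x, y)` for all `x, y`. -/
theorem stmt7
    {d : ℕ} (hd : 1 ≤ d)
    {L m : ℝ} (hm : 0 < m) (hmL : m ≤ L)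
    (f : EuclideanSpace ℝ (Fin d) → ℝ)
    (hdiff : Differentiable ℝ f)
    (hsmooth : ∀ x y : EuclideanSpace ℝ (Fin d),
      f y ≤ f x + ⟪gradient f x, y - x⟫ + L / 2 * ‖y - x‖ ^ 2)
    (hstrong : ∀ x y : EuclideanSpace ℝ (Fin d),
      f x + ⟪gradient f x, y - x⟫ + m / 2 * ‖y - x‖ ^ 2 ≤ f y)
    (xstar : EuclideanSpace ℝ (Fin d)) (hmin : ∀ z, f xstar ≤ f z)
    {Lbar : ℝ} (hLbarL : L ≤ Lbar)
    {a b : ℝ} (hb0 : 0 < b) (hba : b ≤ a) (hbm : b < m) :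
    ∀ x y : EuclideanSpace ℝ (Fin d),
      f y - f xstar + b / 2 * ‖x + Real.sqrt (Lbar / b) • (x - y) - xstar‖ ^ 2
        ≤ (a / b) ^ 2 *
          (f y - f xstar + a / 2 * ‖x + Real.sqrt (Lbar / a) • (x - y) - xstar‖ ^ 2) := by
  intro x y
  have hL0 : (0:ℝ) < L := hm.trans_le hmL
  have hLbar0 : (0:ℝ) < Lbar := hL0.trans_le hLbarL
  have ha0 : (0:ℝ) < a := hb0.trans_le hba
  -- gradient at minimizer is zero
  have hgrad : gradient f xstar = 0 := by
    set g := gradient f xstar with hg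
    by_contra hne
    have hgn : (0:ℝ) < ‖g‖^2 := pow_pos (norm_pos_iff.2 hne) 2
    have h := hsmooth xstar (xstar - (1/L) • g)
    have e1 : xstar - (1/L) • g - xstar = -((1/L) • g) := by abel
    have e2 : ⟪g, xstar - (1/L) • g - xstar⟫ = -(1/L * ‖g‖^2) := by
      rw [e1, inner_neg_right, real_inner_smul_right, real_inner_self_eq_norm_sq]
    have e3 : ‖xstar - (1/L) • g - xstar‖^2 = (1/L)^2 * ‖g‖^2 := by
      rw [e1, norm_neg, norm_smul, mul_pow, Real.norm_eq_abs, sq_abs]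
    rw [e2, e3] at h
    have h2 := hmin (xstar - (1/L) • g)
    have : (0:ℝ) < 1/L * ‖g‖^2 - L/2 * ((1/L)^2 * ‖g‖^2) := by
      have : L/2 * ((1/L)^2 * ‖g‖^2) = 1/(2*L) * ‖g‖^2 := by field_simp
      rw [this]
      have h1L : 1/(2*L) < 1/L := by
        apply div_lt_div_of_pos_left one_pos hL0; linarith
      nlinarith
    linarith
  -- strong convexity at xstar
  have hF : m/2 * ‖y - xstar‖^2 ≤ f y - f xstar := by
    have h := hstrong xstar y
    rw [hgrad, inner_zero_left] at h
    linarith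
  have hF0 : (0:ℝ) ≤ f y - f xstar := sub_nonneg.2 (hmin y)
  -- sqrt abbreviations
  set p := Real.sqrt a with hp
  set q := Real.sqrt b with hq'
  set r := Real.sqrt Lbar with hr'
  have hq0 : 0 < q := Real.sqrt_pos.2 hb0
  have hp0 : 0 < p := Real.sqrt_pos.2 ha0
  have hr0 : 0 ≤ r := Real.sqrt_nonneg _
  have hpq : q ≤ p := Real.sqrt_le_sqrt hba
  have eb : b = q^2 := (Real.sq_sqrt hb0.le).symm
  have ea : a = p^2 := (Real.sq_sqrt ha0.le).symm
  have eL : Lbar = r^2 := (Real.sq_sqrt hLbar0.le).symm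
  have esb : Real.sqrt (Lbar / b) = r / q := Real.sqrt_div hLbar0.le b
  have esa : Real.sqrt (Lbar / a) = r / p := Real.sqrt_div hLbar0.le a
  have hmq : q^2 ≤ m := by rw [← eb]; exact hbm.le
  -- vectors
  set u := x - xstar with hu
  set v := x - y with hv
  have hvb : x + Real.sqrt (Lbar / b) • (x - y) - xstar = u + (r/q) • v := by
    rw [esb, hu, hv]; abel
  have hva : x + Real.sqrt (Lbar / a) • (x - y) - xstar = u + (r/p) • v := by
    rw [esa, hu, hv]; abel
  have hyx : y - xstar = u - v := by rw [hu, hv]; abel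
  set U := ‖u‖^2 with hU
  set V := ‖v‖^2 with hV
  set W := ⟪u, v⟫ with hW
  have hU0 : 0 ≤ U := sq_nonneg _
  have hV0 : 0 ≤ V := sq_nonneg _
  have hCS : W^2 ≤ U*V := by
    have := real_inner_mul_inner_self_le u v
    rw [real_inner_self_eq_norm_sq, real_inner_self_eq_norm_sq] at this
    calc W^2 = ⟪u,v⟫ * ⟪u,v⟫ := by rw [hW]; ring
      _ ≤ U * V := this
  have nexp : ∀ s : ℝ, ‖u + s • v‖^2 = U + 2*(s*W) + s^2*V := by
    intro s
    rw [norm_add_sq_real, real_inner_smul_right, norm_smul, mul_pow, Real.norm_eq_abs, sq_abs]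
  have hsub : ‖u - v‖^2 = U - 2*W + V := by
    rw [norm_sub_sq_real]
  -- quadratic form nonnegativity
  have h4 : q^4 ≤ p^4 := pow_le_pow_left₀ hq0.le hpq 4
  have h6 : q^6 ≤ p^6 := pow_le_pow_left₀ hq0.le hpq 6
  have hm0 : (0:ℝ) ≤ m := hm.le
  have hA : (0:ℝ) ≤ p^6-q^6+(p^4-q^4)*m := by
    have := mul_nonneg (sub_nonneg.2 h4) hm0; linarith
  have hC : (0:ℝ) ≤ (p^4-q^4)*(r^2+m) := by
    apply mul_nonneg (sub_nonneg.2 h4); positivity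
  have habc : (0:ℝ) ≤ (p^6-q^6+(p^4-q^4)*m)*U + 2*(p^5*r - q^5*r - (p^4-q^4)*m)*W
      + ((p^4-q^4)*(r^2+m))*V :=
    absc _ _ _ _ _ _ hA hC (keysc p q r m hq0 hpq hr0 hmq) hU0 hV0 hCS
  -- put goal in p,q,r form
  have hF' : m / 2 * (U - 2*W + V) ≤ f y - f xstar := by
    rw [hyx, hsub] at hF; exact hF
  rw [hvb, hva, nexp, nexp, eb, ea]
  set F := f y - f xstar with hFdef
  have hq4 : (0:ℝ) < q^4 := by positivity
  have hmain : q^4 * (F + q^2/2 * (U + 2*((r/q)*W) + (r/q)^2*V))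
      ≤ p^4 * (F + p^2/2 * (U + 2*((r/p)*W) + (r/p)^2*V)) := by
    have eb2 : q^4 * (F + q^2/2 * (U + 2*((r/q)*W) + (r/q)^2*V))
        = q^4*F + (q^6*U + 2*q^5*r*W + q^4*r^2*V)/2 := by
      field_simp
    have ea2 : p^4 * (F + p^2/2 * (U + 2*((r/p)*W) + (r/p)^2*V))
        = p^4*F + (p^6*U + 2*p^5*r*W + p^4*r^2*V)/2 := by
      field_simp
    have hFs : (p^4-q^4) * (m/2*(U - 2*W + V)) ≤ (p^4-q^4) * F :=
      mul_le_mul_of_nonneg_left hF' (sub_nonneg.2 h4)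
    rw [eb2, ea2]
    linarith [habc, hFs]
  calc F + q^2/2 * (U + 2*((r/q)*W) + (r/q)^2*V)
      = (q^4 * (F + q^2/2 * (U + 2*((r/q)*W) + (r/q)^2*V))) / q^4 := by
        field_simp
    _ ≤ (p^4 * (F + p^2/2 * (U + 2*((r/p)*W) + (r/p)^2*V))) / q^4 := by
        gcongr
    _ = (p^2/q^2)^2 * (F + p^2/2 * (U + 2*((r/p)*W) + (r/p)^2*V)) := by
        field_simp
end

section
/- Let d ≥ 1, let f ∈ F(L,m) with unique minimizer x*, let L̄ ≥ L with κ̄ = L̄/m > 1, and let a be a real number with m ≤ a ≤ L̄. Then for all x, y ∈ ℝ^d: f(y) − f(x*) + (a/2)‖x + √(L̄/a)(x − y) − x*‖² ≤ (a/m)·( W(x, y) + (ᾱ/√κ̄) U(x, y) ), where ᾱ = 1 − β(a)/θ with β(a) = (√(L̄/a) − 1)/(√(L̄/a) + 1) and θ = (√κ̄ − 1)/(√κ̄ + 1). -/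
set_option maxHeartbeats 1000000


open scoped RealInnerProductSpace

open scoped RealInnerProductSpace

lemma aux_quad (A B C P Q I : ℝ) (hA : 0 ≤ A) (hB : 0 ≤ B) (hAB : C^2 ≤ A*B)
    (hP : 0 ≤ P) (hQ : 0 ≤ Q) (hPQ : I^2 ≤ P*Q) :
    0 ≤ A*P + B*Q + 2*C*I := by
  nlinarith [sq_nonneg (A*P - B*Q), sq_nonneg (A*P + B*Q + 2*C*I), mul_nonneg hA hP,
    mul_nonneg hB hQ, sq_nonneg (C*I), mul_nonneg (mul_nonneg hA hP) (mul_nonneg hB hQ),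
    sq_nonneg (A*P + B*Q)]

lemma aux_C (s k : ℝ) (hs1 : 1 ≤ s) (hsk : s ≤ k) (hk1 : 1 < k) :
    (k - s - (2*(k-s)/((s+1)*(k-1)))*k)^2
      ≤ (2*(k-s)/((s+1)*(k-1)))*k*(k^2 - s^2 + (2*(k-s)/((s+1)*(k-1)))*k) := by
  have hD : 0 < (s+1)*(k-1) := by nlinarith
  have cert : 0 ≤ (k-s)^2 * ((s+1)*(k-1)) * (2*k*(k+s+2) - (s+1)*(k-1)) := by
    apply mul_nonneg (mul_nonneg (sq_nonneg _) hD.le) (by nlinarith)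
  have key : ((k-s)*((s+1)*(k-1)) - 2*(k-s)*k)^2
      ≤ 2*(k-s)*k*((k^2-s^2)*((s+1)*(k-1)) + 2*(k-s)*k) := by nlinarith [cert]
  have e1 : k - s - (2*(k-s)/((s+1)*(k-1)))*k
      = ((k-s)*((s+1)*(k-1)) - 2*(k-s)*k) / ((s+1)*(k-1)) := by
    field_simp [show k - 1 ≠ 0 by linarith, show s + 1 ≠ 0 by linarith] <;> ring
  have e3 : (2*(k-s)/((s+1)*(k-1)))*k*(k^2 - s^2 + (2*(k-s)/((s+1)*(k-1)))*k)
      = (2*(k-s)*k*((k^2-s^2)*((s+1)*(k-1)) + 2*(k-s)*k))/((s+1)*(k-1))^2 := by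
    rw [eq_div_iff (by positivity)]
    field_simp [show k - 1 ≠ 0 by linarith, show s + 1 ≠ 0 by linarith] <;> ring
  rw [e1, e3, div_pow]
  exact div_le_div_of_nonneg_right key (by positivity)


/-- Bridging the NAG and GD Lyapunov functions
(Lemma `gc:lem:Lyapgd-2-Lyapacc-ascent`): for `m ≤ a ≤ L̄`,
`f(y) − f(x*) + (a/2)‖x + √(L̄/a)(x − y) − x*‖²
  ≤ (a/m)(W(x,y) + (ᾱ/√κ̄) U(x,y))`,
where `W(x,y) = f(y) − f(x*) + (m/2)‖x + √κ̄(x − y) − x*‖²`,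
`U(x,y) = f(y) − f(x*) + (L̄/2)‖y − x*‖²`, `ᾱ = 1 − β(a)/θ`,
`β(a) = (√(L̄/a) − 1)/(√(L̄/a) + 1)`, `θ = (√κ̄ − 1)/(√κ̄ + 1)`, `κ̄ = L̄/m`. -/
theorem stmt9
    {d : ℕ} (hd : 1 ≤ d)
    {L m : ℝ} (hm : 0 < m) (hmL : m ≤ L)
    (f : EuclideanSpace ℝ (Fin d) → ℝ)
    (hdiff : Differentiable ℝ f)
    (hsmooth : ∀ x y : EuclideanSpace ℝ (Fin d),
      f y ≤ f x + ⟪gradient f x, y - x⟫ + L / 2 * ‖y - x‖ ^ 2)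
    (hstrong : ∀ x y : EuclideanSpace ℝ (Fin d),
      f x + ⟪gradient f x, y - x⟫ + m / 2 * ‖y - x‖ ^ 2 ≤ f y)
    (xstar : EuclideanSpace ℝ (Fin d)) (hmin : ∀ z, f xstar ≤ f z)
    {Lbar : ℝ} (hLbarL : L ≤ Lbar) (hkappa : 1 < Lbar / m)
    {a : ℝ} (hma : m ≤ a) (haL : a ≤ Lbar) :
    ∀ x y : EuclideanSpace ℝ (Fin d),
      f y - f xstar + a / 2 * ‖x + Real.sqrt (Lbar / a) • (x - y) - xstar‖ ^ 2
        ≤ (a / m) *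
          ((f y - f xstar + m / 2 * ‖x + Real.sqrt (Lbar / m) • (x - y) - xstar‖ ^ 2) +
            ((1 - ((Real.sqrt (Lbar / a) - 1) / (Real.sqrt (Lbar / a) + 1)) /
                  ((Real.sqrt (Lbar / m) - 1) / (Real.sqrt (Lbar / m) + 1))) /
              Real.sqrt (Lbar / m)) *
              (f y - f xstar + Lbar / 2 * ‖y - xstar‖ ^ 2)) := by
  intro x y
  have ha : 0 < a := lt_of_lt_of_le hm hma
  have hLb : 0 < Lbar := lt_of_lt_of_le ha haL
  set s := Real.sqrt (Lbar / a) with hs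
  set k := Real.sqrt (Lbar / m) with hk
  have hs2 : s ^ 2 = Lbar / a := Real.sq_sqrt (by positivity)
  have hk2 : k ^ 2 = Lbar / m := Real.sq_sqrt (by positivity)
  have hs0 : 0 ≤ s := Real.sqrt_nonneg _
  have hk0 : 0 ≤ k := Real.sqrt_nonneg _
  have hs1 : 1 ≤ s := by
    have h1 : (1:ℝ) ≤ Lbar / a := (one_le_div ha).mpr haL
    nlinarith [hs2]
  have hsk : s ≤ k := by
    have : Lbar / a ≤ Lbar / m := div_le_div_of_nonneg_left hLb.le hm hma
    exact Real.sqrt_le_sqrt this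
  have hk1 : 1 < k := by nlinarith [hk2]
  have hkpos : 0 < k := by linarith
  have hLm : Lbar = m * k ^ 2 := by rw [hk2]; field_simp
  -- rewrite alpha
  have hαeq : 1 - ((s - 1) / (s + 1)) / ((k - 1) / (k + 1)) = 2*(k-s)/((s+1)*(k-1)) := by
    have h1 : s + 1 ≠ 0 := by linarith
    have h2 : k + 1 ≠ 0 := by linarith
    have h3 : k - 1 ≠ 0 := by linarith
    field_simp
    ring
  rw [hαeq]
  -- norm expansions
  set u := x - xstar with hu
  set v := x - y with hv
  have huv1 : x + s • v - xstar = u + s • v := by rw [hu]; abel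
  have huv2 : x + k • v - xstar = u + k • v := by rw [hu]; abel
  have huv3 : y - xstar = u - v := by rw [hu, hv]; abel
  have expand : ∀ t : ℝ, 0 ≤ t → ‖u + t • v‖ ^ 2 = ‖u‖^2 + 2*t*⟪u,v⟫ + t^2*‖v‖^2 := by
    intro t ht
    rw [norm_add_sq_real, real_inner_smul_right, norm_smul, Real.norm_eq_abs,
      abs_of_nonneg ht, mul_pow]
    ring
  rw [huv1, huv2, huv3, expand s hs0, expand k hk0, norm_sub_sq_real u v]
  set P := ‖u‖^2 with hP
  set Q := ‖v‖^2 with hQ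
  set I := ⟪u,v⟫ with hI
  have hPn : 0 ≤ P := sq_nonneg _
  have hQn : 0 ≤ Q := sq_nonneg _
  have hCS : I^2 ≤ P*Q := by
    have := real_inner_mul_inner_self_le u v
    rw [real_inner_self_eq_norm_sq, real_inner_self_eq_norm_sq] at this
    nlinarith [this]
  set α := 2*(k-s)/((s+1)*(k-1)) with hα
  have hα0 : 0 ≤ α := by
    rw [hα]
    exact div_nonneg (by linarith) (mul_nonneg (by linarith) (by linarith))
  have key : 0 ≤ α*k*P + (k^2 - s^2 + α*k)*Q + 2*(k - s - α*k)*I := by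
    apply aux_quad _ _ _ _ _ _ (mul_nonneg hα0 hk0) (by nlinarith) _ hPn hQn hCS
    exact hα ▸ aux_C s k hs1 hsk hk1
  set r := a / m with hr
  set c := α / k with hc
  have hre : a = r * m := by rw [hr]; field_simp
  have hce : α = c * k := by rw [hc]; field_simp
  have hr1 : 1 ≤ r := (one_le_div hm).mpr hma
  have hc0 : 0 ≤ c := div_nonneg hα0 hk0
  have hF : 0 ≤ f y - f xstar := sub_nonneg.mpr (hmin y)
  have t1 : 0 ≤ (r - 1) * (f y - f xstar) := mul_nonneg (by linarith) hF
  have t2 : 0 ≤ r * c * (f y - f xstar) := mul_nonneg (mul_nonneg (by linarith) hc0) hF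
  have t3 : 0 ≤ (r*m/2) * (α*k*P + (k^2 - s^2 + α*k)*Q + 2*(k - s - α*k)*I) :=
    mul_nonneg (by positivity) key
  rw [hce] at t3
  rw [hre, hLm]
  nlinarith [t1, t2, t3]
end

section
/- (i) Given σ > 1, set δ_σ = (σ − 1)²/(4σ). Then r_δ(κ) ≤ r_acc(σ'κ) for all δ ∈ (0, δ_σ], all σ' ≥ σ, and all κ ≥ 1 + δ. (ii) Conversely, given δ > 0, set σ_δ = 1 + 2δ + 2√(δ(1+δ)). Then r_{δ'}(κ) ≤ r_acc(σκ) for all δ' ∈ (0, δ], all σ ≥ σ_δ, and all κ ≥ 1 + δ'. -/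
/-- The accelerated rate `r_acc(z) = (√z − 1)/√z`. -/
noncomputable def rAcc (z : ℝ) : ℝ := (Real.sqrt z - 1) / Real.sqrt z

/-- `r_δ(z) = (√(z−1)/√z)·(√(z−1) + √δ)/(√z + √(1+δ))`. -/
noncomputable def rDelta (δ z : ℝ) : ℝ :=
  Real.sqrt (z - 1) / Real.sqrt z *
    ((Real.sqrt (z - 1) + Real.sqrt δ) / (Real.sqrt z + Real.sqrt (1 + δ)))

lemma core_lemma {δ κ σ : ℝ} (hδ : 0 < δ) (hκ : 1 + δ ≤ κ)
    (hσ : (Real.sqrt δ + Real.sqrt (1 + δ)) ^ 2 ≤ σ) :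
    rDelta δ κ ≤ rAcc (σ * κ) := by
  set a := Real.sqrt δ with ha
  set b := Real.sqrt (1 + δ) with hb
  set c := Real.sqrt κ with hc
  set d := Real.sqrt (κ - 1) with hd
  have ha0 : 0 < a := Real.sqrt_pos.2 hδ
  have hb1 : 1 ≤ b := by
    rw [show (1:ℝ) = Real.sqrt 1 by simp, hb]
    exact Real.sqrt_le_sqrt (by linarith)
  have hc1 : 1 ≤ c := by
    rw [show (1:ℝ) = Real.sqrt 1 by simp, hc]
    exact Real.sqrt_le_sqrt (by linarith)
  have hd0 : 0 ≤ d := Real.sqrt_nonneg _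
  have hdc : d ≤ c := Real.sqrt_le_sqrt (by linarith)
  have ha2 : a ^ 2 = δ := Real.sq_sqrt hδ.le
  have hb2 : b ^ 2 = 1 + δ := Real.sq_sqrt (by linarith)
  have hc2 : c ^ 2 = κ := Real.sq_sqrt (by linarith)
  have hd2 : d ^ 2 = κ - 1 := Real.sq_sqrt (by linarith)
  have hb2' : b ^ 2 = 1 + a ^ 2 := by rw [hb2, ha2]
  have hd2' : d ^ 2 = c ^ 2 - 1 := by rw [hd2, hc2]
  have hσ0 : 0 ≤ σ := le_trans (sq_nonneg _) hσ
  have hsab : a + b ≤ Real.sqrt σ := by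
    have h := Real.sqrt_le_sqrt hσ
    rwa [Real.sqrt_sq (by positivity)] at h
  set t := Real.sqrt (σ * κ) with htdef
  have ht : t = Real.sqrt σ * c := by rw [htdef, hc, Real.sqrt_mul hσ0]
  have htge : (a + b) * c ≤ t := by
    rw [ht]
    exact mul_le_mul_of_nonneg_right hsab (by linarith)
  have hsc1 : 1 ≤ (a + b) * c := by nlinarith
  have ht0 : 0 < t := lt_of_lt_of_le zero_lt_one (le_trans hsc1 htge)
  have hcb0 : 0 < c * (c + b) := by nlinarith
  have habc0 : 0 < (a + b) * c := by linarith
  rw [rDelta, rAcc, ← ha, ← hb, ← hc, ← hd, ← htdef, div_mul_div_comm]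
  have step1 : d * (d + a) / (c * (c + b)) ≤ ((a + b) * c - 1) / ((a + b) * c) := by
    rw [div_le_div_iff₀ hcb0 habc0]
    have key : ((a + b) * c - 1) * (c * (c + b)) - d * (d + a) * ((a + b) * c)
        = c * (a * ((a + b) * (c - d) + 1)) := by
      linear_combination c ^ 2 * hb2' - (a + b) * c * hd2'
    nlinarith [mul_nonneg (mul_nonneg ha0.le (by linarith : (0:ℝ) ≤ a + b))
      (by linarith : (0:ℝ) ≤ c - d)]
  have step2 : ((a + b) * c - 1) / ((a + b) * c) ≤ (t - 1) / t := by
    rw [div_le_div_iff₀ habc0 ht0]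
    nlinarith
  linarith

/-- (Lemma `la:lem:rhoeps-leq-racc`.)
(i) Given `σ > 1` and `δ_σ = (σ − 1)²/(4σ)`, `r_δ(κ) ≤ r_acc(σ'κ)` for all
`δ ∈ (0, δ_σ]`, `σ' ≥ σ`, `κ ≥ 1 + δ`.
(ii) Given `δ > 0` and `σ_δ = 1 + 2δ + 2√(δ(1+δ))`, `r_{δ'}(κ) ≤ r_acc(σκ)`
for all `δ' ∈ (0, δ]`, `σ ≥ σ_δ`, `κ ≥ 1 + δ'`. -/
theorem stmt16 :
    (∀ σ : ℝ, 1 < σ → ∀ δ σ' κ : ℝ,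
      0 < δ → δ ≤ (σ - 1) ^ 2 / (4 * σ) → σ ≤ σ' → 1 + δ ≤ κ →
        rDelta δ κ ≤ rAcc (σ' * κ)) ∧
    (∀ δ : ℝ, 0 < δ → ∀ δ' σ κ : ℝ,
      0 < δ' → δ' ≤ δ → 1 + 2 * δ + 2 * Real.sqrt (δ * (1 + δ)) ≤ σ → 1 + δ' ≤ κ →
        rDelta δ' κ ≤ rAcc (σ * κ)) := by
  constructor
  · intro σ hσ1 δ σ' κ hδ hδσ hσσ' hκ
    apply core_lemma hδ hκ
    -- show (√δ + √(1+δ))^2 ≤ σ'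
    set a := Real.sqrt δ with ha
    set b := Real.sqrt (1 + δ) with hb
    set e := Real.sqrt σ with he
    have ha0 : 0 < a := Real.sqrt_pos.2 hδ
    have hb0 : 0 < b := Real.sqrt_pos.2 (by linarith)
    have he0 : 0 ≤ e := Real.sqrt_nonneg _
    have ha2 : a ^ 2 = δ := Real.sq_sqrt hδ.le
    have hb2 : b ^ 2 = 1 + δ := Real.sq_sqrt (by linarith)
    have he2 : e ^ 2 = σ := Real.sq_sqrt (by linarith)
    have h4 : 4 * σ * δ ≤ (σ - 1) ^ 2 := by
      have := (le_div_iff₀ (by linarith : (0:ℝ) < 4 * σ)).mp hδσ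
      linarith
    have h4' : (2 * e * a) ^ 2 ≤ (e ^ 2 - 1) ^ 2 := by
      calc (2 * e * a) ^ 2 = 4 * σ * δ := by rw [mul_pow, mul_pow, he2, ha2]; ring
        _ ≤ (σ - 1) ^ 2 := h4
        _ = (e ^ 2 - 1) ^ 2 := by rw [he2]
    have he1 : 1 ≤ e ^ 2 := by rw [he2]; linarith
    have h2ea : 2 * e * a ≤ e ^ 2 - 1 := by nlinarith [mul_nonneg he0 ha0.le]
    have hab : a < b := by nlinarith
    have hge : a + b ≤ e := by
      by_contra h
      push_neg at h
      have hp : 0 < b - (e - a) := by linarith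
      have hq : 0 < b + (e - a) := by linarith
      nlinarith [mul_pos hp hq]
    calc (a + b) ^ 2 ≤ e ^ 2 := by nlinarith
      _ = σ := he2
      _ ≤ σ' := hσσ'
  · intro δ hδ δ' σ κ hδ' hle hσ hκ
    apply core_lemma hδ' hκ
    have hmul : Real.sqrt δ' * Real.sqrt (1 + δ') = Real.sqrt (δ' * (1 + δ')) :=
      (Real.sqrt_mul hδ'.le _).symm
    have hsq : (Real.sqrt δ' + Real.sqrt (1 + δ')) ^ 2
        = 1 + 2 * δ' + 2 * Real.sqrt (δ' * (1 + δ')) := by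
      rw [add_sq, Real.sq_sqrt hδ'.le, Real.sq_sqrt (by linarith : (0:ℝ) ≤ 1 + δ'), ← hmul]
      ring
    have hmono : Real.sqrt (δ' * (1 + δ')) ≤ Real.sqrt (δ * (1 + δ)) :=
      Real.sqrt_le_sqrt (by nlinarith)
    rw [hsq]
    linarith
end

section
/- Let δ_u > 0 and δ_ℓ > 0, and define σ_φ(δ_u, δ_ℓ, κ) = 1/((1 − r_φ(δ_u, δ_ℓ, κ)²)² κ) for κ ≥ 1 + δ_ℓ. Then: (i) r_φ(δ_u, δ_ℓ, κ)² ≤ r_acc(σ_φ(δ_u, δ_ℓ, κ)·κ) for all κ ≥ 1 + δ_ℓ; (ii) the function κ ↦ σ_φ(δ_u, δ_ℓ, κ) is bounded on [1 + δ_ℓ, ∞); and (iii) its limit as κ → ∞ equals 1/(4(√(δ_u + δ_ℓ + δ_u δ_ℓ) − √(δ_u(1 + δ_ℓ)))²). -/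
/-- `r_φ(δ_u, δ_ℓ, κ) = (κ − (1+δ_ℓ) + √((κ − (1+δ_ℓ))·δ_u(1+δ_ℓ)))
      / (κ − 1 + √((κ − 1)(δ_u + δ_ℓ + δ_u δ_ℓ)))`. -/
noncomputable def rPhi (δu δl κ : ℝ) : ℝ :=
  (κ - (1 + δl) + Real.sqrt ((κ - (1 + δl)) * (δu * (1 + δl)))) /
    (κ - 1 + Real.sqrt ((κ - 1) * (δu + δl + δu * δl)))

/-- `σ_φ(δ_u, δ_ℓ, κ) = 1/((1 − r_φ(δ_u, δ_ℓ, κ)²)² κ)`. -/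
noncomputable def sigmaPhi (δu δl κ : ℝ) : ℝ :=
  1 / ((1 - rPhi δu δl κ ^ 2) ^ 2 * κ)

open Filter Real in
lemma rphi_bounds {δu δl κ : ℝ} (hδu : 0 < δu) (hδl : 0 < δl)
    (hκ : 1 + δl ≤ κ) : 0 ≤ rPhi δu δl κ ∧ rPhi δu δl κ < 1 := by
  have hA : 0 ≤ κ - (1 + δl) := by linarith
  have hB : 0 < κ - 1 := by linarith
  have hp : 0 ≤ Real.sqrt ((κ - (1 + δl)) * (δu * (1 + δl))) := Real.sqrt_nonneg _
  have hq : 0 ≤ Real.sqrt ((κ - 1) * (δu + δl + δu * δl)) := Real.sqrt_nonneg _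
  have hpq : Real.sqrt ((κ - (1 + δl)) * (δu * (1 + δl))) ≤
      Real.sqrt ((κ - 1) * (δu + δl + δu * δl)) := by
    apply Real.sqrt_le_sqrt
    nlinarith [mul_nonneg hδl.le hB.le, mul_pos hδu hδl, mul_pos (mul_pos hδu hδl) hδl]
  have hD : 0 < κ - 1 + Real.sqrt ((κ - 1) * (δu + δl + δu * δl)) := by linarith
  unfold rPhi
  refine ⟨div_nonneg (by linarith) hD.le, ?_⟩
  rw [div_lt_one hD]; linarith


open Filter Real in
lemma part_one {δu δl : ℝ} (hδu : 0 < δu) (hδl : 0 < δl) {κ : ℝ}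
    (hκ : 1 + δl ≤ κ) : rPhi δu δl κ ^ 2 ≤ rAcc (sigmaPhi δu δl κ * κ) := by
  obtain ⟨hr0, hr1⟩ := rphi_bounds hδu hδl hκ
  set r := rPhi δu δl κ with hr
  have hκ0 : 0 < κ := by linarith
  have h1 : 0 < 1 - r ^ 2 := by nlinarith
  have hσ : sigmaPhi δu δl κ * κ = (1 / (1 - r ^ 2)) ^ 2 := by
    unfold sigmaPhi
    field_simp
    rw [← hr]; field_simp [h1.ne', hκ0.ne']
  rw [hσ, rAcc, Real.sqrt_sq (by positivity)]
  have h2 : (1 / (1 - r ^ 2) - 1) / (1 / (1 - r ^ 2)) = r ^ 2 := by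
    field_simp
    ring
  rw [h2]

open Filter Real in
set_option maxHeartbeats 1000000 in
lemma part_two {δu δl : ℝ} (hδu : 0 < δu) (hδl : 0 < δl) {κ : ℝ}
    (hκ : 1 + δl ≤ κ) :
    sigmaPhi δu δl κ ≤ 4 * (δu + δl + δu * δl) / δl ^ 2 := by
  obtain ⟨hr0, hr1⟩ := rphi_bounds hδu hδl hκ
  have hκ0 : 0 < κ := by linarith
  have hA : 0 ≤ κ - (1 + δl) := by linarith
  have hB : 0 < κ - 1 := by linarith
  have ha : 0 < δu * (1 + δl) := by positivity
  have hb : 0 < δu + δl + δu * δl := by positivity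
  set p := Real.sqrt ((κ - (1 + δl)) * (δu * (1 + δl))) with hpdef
  set q := Real.sqrt ((κ - 1) * (δu + δl + δu * δl)) with hqdef
  have hp : 0 ≤ p := by rw [hpdef]; exact Real.sqrt_nonneg _
  clear_value p q
  have hq : 0 < q := by rw [hqdef]; exact Real.sqrt_pos.mpr (by positivity)
  have hp2 : p ^ 2 = (κ - (1 + δl)) * (δu * (1 + δl)) := by
    rw [hpdef]; exact Real.sq_sqrt (by positivity)
  have hq2 : q ^ 2 = (κ - 1) * (δu + δl + δu * δl) := by
    rw [hqdef]; exact Real.sq_sqrt (by positivity)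
  have hpq : p ≤ q := by
    rw [hpdef, hqdef]
    apply Real.sqrt_le_sqrt
    nlinarith [mul_nonneg hδl.le hB.le, mul_pos hδu hδl, mul_pos (mul_pos hδu hδl) hδl]
  have hD : 0 < κ - 1 + q := by linarith
  have hrr : rPhi δu δl κ = (κ - (1 + δl) + p) / (κ - 1 + q) := by
    rw [hpdef, hqdef]; rfl
  set r := rPhi δu δl κ with hr
  clear_value r
  -- 1 - r = (δl + q - p)/(κ - 1 + q)
  have h1r : 1 - r = (δl + q - p) / (κ - 1 + q) := by
    rw [hrr]; field_simp; ring
  -- key: 2 q (q - p) ≥ (κ-1) δl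
  have f1 : (κ - 1) * δl ≤ 2 * q * (q - p) := by
    nlinarith [sq_nonneg (q - p), mul_nonneg hA (mul_pos hδu (by linarith : (0:ℝ) < 1 + δl)).le,
      mul_nonneg hB.le ha.le]
  have f2 : q ^ 2 ≤ κ * (δu + δl + δu * δl) := by nlinarith
  have h3 : δl * (2 * q + (κ - 1)) ≤ 2 * q * (δl + q - p) := by nlinarith
  have h4 : (δl * (2 * q + (κ - 1))) ^ 2 ≤ (2 * q * (δl + q - p)) ^ 2 := by
    have := mul_self_le_mul_self (by positivity) h3
    nlinarith [this]
  -- main: δl^2 (κ-1+q)^2 ≤ 4 b κ (δl+q-p)^2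
  have main : δl ^ 2 * (κ - 1 + q) ^ 2 ≤
      4 * (δu + δl + δu * δl) * κ * (δl + q - p) ^ 2 := by
    have stepB : δl ^ 2 * (κ - 1 + q) ^ 2 ≤ δl ^ 2 * (2 * q + (κ - 1)) ^ 2 := by
      have h5 : (κ - 1 + q) ^ 2 ≤ (2 * q + (κ - 1)) ^ 2 :=
        pow_le_pow_left₀ (by linarith) (by linarith) 2
      exact mul_le_mul_of_nonneg_left h5 (by positivity)
    have stepA : δl ^ 2 * (2 * q + (κ - 1)) ^ 2 ≤ 4 * q ^ 2 * (δl + q - p) ^ 2 := by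
      have e1 : δl ^ 2 * (2 * q + (κ - 1)) ^ 2 = (δl * (2 * q + (κ - 1))) ^ 2 := by ring
      have e2 : 4 * q ^ 2 * (δl + q - p) ^ 2 = (2 * q * (δl + q - p)) ^ 2 := by ring
      rw [e1, e2]; exact h4
    have stepC : 4 * q ^ 2 * (δl + q - p) ^ 2 ≤
        4 * (δu + δl + δu * δl) * κ * (δl + q - p) ^ 2 := by
      have h6 := mul_le_mul_of_nonneg_right f2 (sq_nonneg (δl + q - p))
      nlinarith [h6]
    linarith
  have hkey : δl ^ 2 / (4 * (δu + δl + δu * δl)) ≤ (1 - r) ^ 2 * κ := by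
    have expand : (1 - r) ^ 2 * κ = (δl + q - p) ^ 2 * κ / (κ - 1 + q) ^ 2 := by
      rw [h1r, div_pow, div_mul_eq_mul_div]
    rw [expand, div_le_div_iff₀ (by positivity) (by positivity)]
    nlinarith [main]
  -- σ ≤ 1/((1-r)^2 κ)
  have hmono : (1 - r) ^ 2 * κ ≤ (1 - r ^ 2) ^ 2 * κ := by
    have h8 : 1 - r ≤ 1 - r ^ 2 := by nlinarith
    have h0 : 0 ≤ 1 - r := by linarith
    exact mul_le_mul_of_nonneg_right (pow_le_pow_left₀ h0 h8 2) hκ0.le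
  have hpos : 0 < δl ^ 2 / (4 * (δu + δl + δu * δl)) := by positivity
  calc sigmaPhi δu δl κ = 1 / ((1 - r ^ 2) ^ 2 * κ) := by rw [sigmaPhi, ← hr]
    _ ≤ 1 / (δl ^ 2 / (4 * (δu + δl + δu * δl))) := by
        apply one_div_le_one_div_of_le hpos; linarith
    _ = 4 * (δu + δl + δu * δl) / δl ^ 2 := by
        rw [one_div_div]

open Filter Real in
set_option maxHeartbeats 1000000 in
lemma part_three {δu δl : ℝ} (hδu : 0 < δu) (hδl : 0 < δl) :
    Filter.Tendsto (fun κ : ℝ => sigmaPhi δu δl κ) Filter.atTop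
      (nhds (1 / (4 * (Real.sqrt (δu + δl + δu * δl) -
        Real.sqrt (δu * (1 + δl))) ^ 2))) := by
  set a : ℝ := δu * (1 + δl) with hadef
  set b : ℝ := δu + δl + δu * δl with hbdef
  have ha : 0 < a := by positivity
  have hb : 0 < b := by positivity
  have hab : a < b := by simp only [hadef, hbdef]; nlinarith
  -- auxiliary continuous functions of x = 1/κ
  set h : ℝ → ℝ := fun x =>
    (1 - (1 + δl) * x + Real.sqrt ((x - (1 + δl) * x ^ 2) * a)) /
      (1 - x + Real.sqrt ((x - x ^ 2) * b)) with hhdef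
  set g : ℝ → ℝ := fun x =>
    (δl * Real.sqrt x + Real.sqrt ((1 - x) * b) - Real.sqrt ((1 - (1 + δl) * x) * a)) /
      (1 - x + Real.sqrt ((x - x ^ 2) * b)) with hgdef
  have hdenc : Continuous fun x : ℝ => 1 - x + Real.sqrt ((x - x ^ 2) * b) := by
    fun_prop
  have hden0 : (fun x : ℝ => 1 - x + Real.sqrt ((x - x ^ 2) * b)) 0 = 1 := by
    norm_num
  have hch : ContinuousAt h 0 := by
    apply ContinuousAt.div
    · fun_prop
    · exact hdenc.continuousAt
    · norm_num
  have hcg : ContinuousAt g 0 := by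
    apply ContinuousAt.div
    · fun_prop
    · exact hdenc.continuousAt
    · norm_num
  have hh0 : h 0 = 1 := by
    simp only [hhdef]
    norm_num
  have hg0 : g 0 = Real.sqrt b - Real.sqrt a := by
    simp only [hgdef]
    norm_num
  -- identities for κ ≥ 1 + δl
  have hid : ∀ κ : ℝ, 1 + δl ≤ κ →
      h κ⁻¹ = rPhi δu δl κ ∧ g κ⁻¹ = Real.sqrt κ * (1 - rPhi δu δl κ) := by
    intro κ hκ
    have hκ0 : 0 < κ := by linarith
    have hA : 0 ≤ κ - (1 + δl) := by linarith
    have hB : 0 < κ - 1 := by linarith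
    set p := Real.sqrt ((κ - (1 + δl)) * a) with hpdef
    set q := Real.sqrt ((κ - 1) * b) with hqdef
    have hp : 0 ≤ p := Real.sqrt_nonneg _
    have hq : 0 ≤ q := Real.sqrt_nonneg _
    have hD : 0 < κ - 1 + q := by linarith
    set s := Real.sqrt κ with hsdef
    have hs : s ^ 2 = κ := Real.sq_sqrt hκ0.le
    have hs0 : 0 < s := Real.sqrt_pos.mpr hκ0
    -- sqrt identities
    have e1 : Real.sqrt ((κ⁻¹ - (1 + δl) * κ⁻¹ ^ 2) * a) = p / κ := by
      rw [show (κ⁻¹ - (1 + δl) * κ⁻¹ ^ 2) * a = ((κ - (1 + δl)) * a) / κ ^ 2 by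
        field_simp]
      rw [Real.sqrt_div (by positivity), Real.sqrt_sq hκ0.le]
    have e2 : Real.sqrt ((κ⁻¹ - κ⁻¹ ^ 2) * b) = q / κ := by
      rw [show (κ⁻¹ - κ⁻¹ ^ 2) * b = ((κ - 1) * b) / κ ^ 2 by field_simp <;> ring]
      rw [Real.sqrt_div (by positivity), Real.sqrt_sq hκ0.le]
    have e3 : Real.sqrt ((1 - (1 + δl) * κ⁻¹) * a) = p / s := by
      rw [show (1 - (1 + δl) * κ⁻¹) * a = ((κ - (1 + δl)) * a) / κ by field_simp <;> ring]
      rw [Real.sqrt_div (by positivity)]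
    have e4 : Real.sqrt ((1 - κ⁻¹) * b) = q / s := by
      rw [show (1 - κ⁻¹) * b = ((κ - 1) * b) / κ by field_simp <;> ring]
      rw [Real.sqrt_div (by positivity)]
    have e5 : Real.sqrt κ⁻¹ = s⁻¹ := Real.sqrt_inv κ
    have hrr : rPhi δu δl κ = (κ - (1 + δl) + p) / (κ - 1 + q) := rfl
    have hκne : κ ≠ 0 := hκ0.ne'
    have hDne : κ - 1 + q ≠ 0 := hD.ne'
    have hden : 1 - κ⁻¹ + q / κ = (κ - 1 + q) / κ := by field_simp
    constructor
    · simp only [hhdef, e1, e2, hrr]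
      rw [hden]
      have hnum : 1 - (1 + δl) * κ⁻¹ + p / κ = (κ - (1 + δl) + p) / κ := by
        field_simp
      rw [hnum, div_div_div_cancel_right₀]
      exact hκne
    · simp only [hgdef, e2, e3, e4, e5, hrr]
      rw [hden]
      have hDne2 : s ^ 2 - 1 + q ≠ 0 := by rw [hs]; exact hDne
      rw [← hs]
      field_simp
      ring
  -- tendsto statements
  have hinv : Tendsto (fun κ : ℝ => κ⁻¹) atTop (nhds 0) := tendsto_inv_atTop_zero
  have T2 : Tendsto (fun κ : ℝ => rPhi δu δl κ) atTop (nhds 1) := by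
    have := (hch.tendsto).comp hinv
    rw [hh0] at this
    apply this.congr'
    filter_upwards [eventually_ge_atTop (1 + δl)] with κ hκ
    exact (hid κ hκ).1
  have T1 : Tendsto (fun κ : ℝ => Real.sqrt κ * (1 - rPhi δu δl κ)) atTop
      (nhds (Real.sqrt b - Real.sqrt a)) := by
    have := (hcg.tendsto).comp hinv
    rw [hg0] at this
    apply this.congr'
    filter_upwards [eventually_ge_atTop (1 + δl)] with κ hκ
    exact (hid κ hκ).2
  -- combine
  have hne : (Real.sqrt b - Real.sqrt a) ^ 2 * (1 + 1) ^ 2 ≠ 0 := by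
    have : Real.sqrt a < Real.sqrt b := Real.sqrt_lt_sqrt ha.le hab
    have h9 : Real.sqrt b - Real.sqrt a ≠ 0 := by intro hc; linarith
    exact mul_ne_zero (pow_ne_zero 2 h9) (by norm_num)
  have T3 : Tendsto (fun κ : ℝ =>
      ((Real.sqrt κ * (1 - rPhi δu δl κ)) ^ 2 * (1 + rPhi δu δl κ) ^ 2)⁻¹) atTop
      (nhds (((Real.sqrt b - Real.sqrt a) ^ 2 * (1 + 1) ^ 2)⁻¹)) := by
    exact ((T1.pow 2).mul ((tendsto_const_nhds.add T2).pow 2)).inv₀ hne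
  have goalval : ((Real.sqrt b - Real.sqrt a) ^ 2 * (1 + 1) ^ 2)⁻¹ =
      1 / (4 * (Real.sqrt b - Real.sqrt a) ^ 2) := by
    rw [show (4:ℝ) * (Real.sqrt b - Real.sqrt a) ^ 2 =
      (Real.sqrt b - Real.sqrt a) ^ 2 * (1 + 1) ^ 2 by ring, one_div]
  rw [← goalval]
  apply T3.congr'
  filter_upwards [eventually_ge_atTop (1 + δl)] with κ hκ
  have hκ0 : 0 < κ := by linarith
  rw [sigmaPhi, one_div]
  congr 1
  set s := Real.sqrt κ with hsdef
  have hs : s ^ 2 = κ := Real.sq_sqrt hκ0.le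
  rw [← hs]
  ring

/-- (Lemma `la:lem:rphi-sq-leq-racc`.) For `δ_u, δ_ℓ > 0`:
(i) `r_φ(δ_u, δ_ℓ, κ)² ≤ r_acc(σ_φ(δ_u, δ_ℓ, κ)·κ)` for all `κ ≥ 1 + δ_ℓ`;
(ii) `κ ↦ σ_φ(δ_u, δ_ℓ, κ)` is bounded on `[1 + δ_ℓ, ∞)`;
(iii) `σ_φ(δ_u, δ_ℓ, κ) → 1/(4(√(δ_u + δ_ℓ + δ_u δ_ℓ) − √(δ_u(1+δ_ℓ)))²)`
as `κ → ∞`. -/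
theorem stmt18 {δu δl : ℝ} (hδu : 0 < δu) (hδl : 0 < δl) :
    (∀ κ : ℝ, 1 + δl ≤ κ → rPhi δu δl κ ^ 2 ≤ rAcc (sigmaPhi δu δl κ * κ)) ∧
    (∃ C : ℝ, ∀ κ : ℝ, 1 + δl ≤ κ → sigmaPhi δu δl κ ≤ C) ∧
    Filter.Tendsto (fun κ : ℝ => sigmaPhi δu δl κ) Filter.atTop
      (nhds (1 / (4 * (Real.sqrt (δu + δl + δu * δl) -
        Real.sqrt (δu * (1 + δl))) ^ 2))) := by
  refine ⟨fun κ hκ => part_one hδu hδl hκ,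
    ⟨4 * (δu + δl + δu * δl) / δl ^ 2, fun κ hκ => part_two hδu hδl hκ⟩,
    part_three hδu hδl⟩
end
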